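/- arXiv:1103.1409 — 6 statements merged into one kernel-verified Lean document; each statement's English description precedes it below -/
import Mathlib

section
/- Let n, p ∈ ℕ, let A, B ∈ ℝ^{p×n}, assume the p×2n matrix (A B) has rank p, let G be the linear relation with graph gra G = {(x,x*) ∈ ℝⁿ × ℝⁿ : Ax + Bx* = 0}, and assume G is monotone. Then a linear relation G̃ with gra G ⊆ gra G̃ is maximally monotone if and only if there exists M ∈ ℝ^{p×p} with rank M = n such that the matrix Mᵀ(ABᵀ + BAᵀ)M is negative semidefinite and gra G̃ = {(x,x*) ∈ ℝⁿ × ℝⁿ : Mᵀ(Ax + Bx*) = 0}. -/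
open Matrix Pointwise
open Module

/-- Sum of the eigenspaces of `M + Mᵀ` corresponding to positive eigenvalues. -/
noncomputable def Vpos {m : ℕ} (M : Matrix (Fin m) (Fin m) ℝ) :
    Submodule ℝ (Fin m → ℝ) :=
  ⨆ μ : {t : ℝ // 0 < t}, Module.End.eigenspace (Matrix.mulVecLin (M + Mᵀ)) (μ : ℝ)

/-- Eigenspace of `M + Mᵀ` for the eigenvalue `0`. -/
noncomputable def Vzero {m : ℕ} (M : Matrix (Fin m) (Fin m) ℝ) :
    Submodule ℝ (Fin m → ℝ) :=
  Module.End.eigenspace (Matrix.mulVecLin (M + Mᵀ)) 0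

/-- Sum of the eigenspaces of `M + Mᵀ` corresponding to negative eigenvalues. -/
noncomputable def Vneg {m : ℕ} (M : Matrix (Fin m) (Fin m) ℝ) :
    Submodule ℝ (Fin m → ℝ) :=
  ⨆ μ : {t : ℝ // t < 0}, Module.End.eigenspace (Matrix.mulVecLin (M + Mᵀ)) (μ : ℝ)

/-- A set `S ⊆ ℝⁿ × ℝⁿ` is monotone. -/
def IsMonotoneSet {n : ℕ} (S : Set ((Fin n → ℝ) × (Fin n → ℝ))) : Prop :=
  ∀ a ∈ S, ∀ b ∈ S, 0 ≤ (a.1 - b.1) ⬝ᵥ (a.2 - b.2)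

/-- A set `S ⊆ ℝⁿ × ℝⁿ` is maximally monotone. -/
def IsMaxMonotoneSet {n : ℕ} (S : Set ((Fin n → ℝ) × (Fin n → ℝ))) : Prop :=
  IsMonotoneSet S ∧ ∀ a, (∀ b ∈ S, 0 ≤ (a.1 - b.1) ⬝ᵥ (a.2 - b.2)) → a ∈ S

/-- Graph of the adjoint relation: `(x, x*) ∈ gra T*` iff `(x*, -x) ⟂ gra T`. -/
def adjGraph {n : ℕ} (S : Set ((Fin n → ℝ) × (Fin n → ℝ))) :
    Set ((Fin n → ℝ) × (Fin n → ℝ)) :=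
  {q | ∀ s ∈ S, q.2 ⬝ᵥ s.1 - q.1 ⬝ᵥ s.2 = 0}

namespace Stmt14Aux

variable {n : ℕ}

/-- the sum map `(x,y) ↦ x + y`. -/
def sigma (n : ℕ) : ((Fin n → ℝ) × (Fin n → ℝ)) →ₗ[ℝ] (Fin n → ℝ) :=
  LinearMap.fst ℝ _ _ + LinearMap.snd ℝ _ _

@[simp] lemma sigma_apply (z : (Fin n → ℝ) × (Fin n → ℝ)) : sigma n z = z.1 + z.2 := rfl

lemma dot_self_nonneg {k : ℕ} (x : Fin k → ℝ) : 0 ≤ x ⬝ᵥ x := by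
  apply Finset.sum_nonneg; intro i _; exact mul_self_nonneg _

lemma eq_zero_of_dot_self {k : ℕ} {x : Fin k → ℝ} (h : x ⬝ᵥ x ≤ 0) : x = 0 := by
  have := dotProduct_self_eq_zero (v := x)
  exact this.mp (le_antisymm h (dot_self_nonneg x))

lemma sigma_ker (L : Submodule ℝ ((Fin n → ℝ) × (Fin n → ℝ)))
    (h : ∀ z ∈ L, 0 ≤ z.1 ⬝ᵥ z.2) {z : (Fin n → ℝ) × (Fin n → ℝ)} (hz : z ∈ L)
    (h0 : z.1 + z.2 = 0) : z = 0 := by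
  have h2 : z.2 = -z.1 := by
    have := congrArg (fun w => w - z.1) h0
    simpa [add_sub_cancel_left] using this
  have hq := h z hz
  rw [h2] at hq
  have : z.1 ⬝ᵥ z.1 ≤ 0 := by
    have : z.1 ⬝ᵥ (-z.1) = -(z.1 ⬝ᵥ z.1) := by simp
    linarith [hq, this.symm ▸ hq]
  have h1 : z.1 = 0 := eq_zero_of_dot_self this
  have : z.2 = 0 := by rw [h2, h1]; simp
  exact Prod.ext h1 this

/-- L1: a monotone (nonnegative) subspace has dimension at most n. -/
lemma finrank_le_of_nonneg (L : Submodule ℝ ((Fin n → ℝ) × (Fin n → ℝ)))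
    (h : ∀ z ∈ L, 0 ≤ z.1 ⬝ᵥ z.2) : finrank ℝ L ≤ n := by
  have hinj : Function.Injective ((sigma n).domRestrict L) := by
    rw [← LinearMap.ker_eq_bot]
    rw [LinearMap.ker_eq_bot']
    intro z hz
    have : (z : (Fin n → ℝ) × (Fin n → ℝ)) = 0 := by
      apply sigma_ker L h z.2
      simpa using hz
    exact Subtype.ext this
  calc finrank ℝ L ≤ finrank ℝ (Fin n → ℝ) :=
        LinearMap.finrank_le_finrank_of_injective hinj
    _ = n := Module.finrank_fin_fun ℝ

/-- negate second coordinate -/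
noncomputable def negSnd (n : ℕ) : ((Fin n → ℝ) × (Fin n → ℝ)) ≃ₗ[ℝ] ((Fin n → ℝ) × (Fin n → ℝ)) :=
  (LinearEquiv.refl ℝ _).prodCongr (LinearEquiv.neg ℝ)

@[simp] lemma negSnd_apply (z : (Fin n → ℝ) × (Fin n → ℝ)) : negSnd n z = (z.1, -z.2) := rfl

/-- L1': a nonpositive subspace has dimension at most n. -/
lemma finrank_le_of_nonpos (L : Submodule ℝ ((Fin n → ℝ) × (Fin n → ℝ)))
    (h : ∀ z ∈ L, z.1 ⬝ᵥ z.2 ≤ 0) : finrank ℝ L ≤ n := by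
  have : finrank ℝ (Submodule.map (negSnd n).toLinearMap L) ≤ n := by
    apply finrank_le_of_nonneg
    rintro z ⟨w, hw, rfl⟩
    have := h w hw
    simp only [LinearEquiv.coe_coe, negSnd_apply]
    simp only [dotProduct_neg]
    linarith
  rwa [LinearEquiv.finrank_map_eq (negSnd n) L] at this

lemma quad_nonneg {a b c : ℝ} (ha : 0 ≤ a) (hc : 0 ≤ c) (hd : b ^ 2 ≤ 4 * a * c) (t : ℝ) :
    0 ≤ a * t ^ 2 + b * t + c := by
  rcases ha.eq_or_lt with h | h
  · have hb : b = 0 := by nlinarith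
    simp [← h, hb]; exact hc
  · nlinarith [sq_nonneg (2 * a * t + b)]

end Stmt14Aux

namespace Stmt14Aux

variable {n : ℕ}

/-- span-extension: a point monotonically related to a monotone subspace of dim ≥ n lies in it. -/
lemma mem_of_related (L : Submodule ℝ ((Fin n → ℝ) × (Fin n → ℝ)))
    (hL : ∀ z ∈ L, 0 ≤ z.1 ⬝ᵥ z.2) (hdim : n ≤ finrank ℝ L)
    (a : (Fin n → ℝ) × (Fin n → ℝ))
    (ha : ∀ z ∈ L, 0 ≤ (a.1 - z.1) ⬝ᵥ (a.2 - z.2)) : a ∈ L := by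
  by_contra hmem
  -- L ⊔ span {a} is monotone of dimension > n
  have hq : ∀ w ∈ L ⊔ Submodule.span ℝ {a}, 0 ≤ w.1 ⬝ᵥ w.2 := by
    intro w hw
    rcases Submodule.mem_sup.mp hw with ⟨z, hz, y, hy, rfl⟩
    rcases Submodule.mem_span_singleton.mp hy with ⟨t, rfl⟩
    have hα : 0 ≤ a.1 ⬝ᵥ a.2 := by simpa using ha 0 (zero_mem L)
    have hγ : 0 ≤ z.1 ⬝ᵥ z.2 := hL z hz
    -- discriminant bound from ha applied to s • z
    have hdisc : (z.1 ⬝ᵥ a.2 + a.1 ⬝ᵥ z.2) ^ 2 ≤ 4 * (a.1 ⬝ᵥ a.2) * (z.1 ⬝ᵥ z.2) := by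
      have h1 : ∀ s : ℝ, 0 ≤ (z.1 ⬝ᵥ z.2) * (s * s) + (-(z.1 ⬝ᵥ a.2 + a.1 ⬝ᵥ z.2)) * s
          + a.1 ⬝ᵥ a.2 := by
        intro s
        have := ha (s • z) (L.smul_mem s hz)
        simp only [Prod.smul_fst, Prod.smul_snd, smul_sub, sub_dotProduct,
          dotProduct_sub, smul_dotProduct, dotProduct_smul, smul_eq_mul] at this ⊢
        ring_nf
        ring_nf at this
        linarith [this]
      have := discrim_le_zero (a := z.1 ⬝ᵥ z.2) (b := -(z.1 ⬝ᵥ a.2 + a.1 ⬝ᵥ z.2)) (c := a.1 ⬝ᵥ a.2) h1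
      rw [discrim] at this
      nlinarith [this]
    have hval := quad_nonneg hα hγ hdisc t
    have expand : (z + t • a).1 ⬝ᵥ (z + t • a).2
        = (a.1 ⬝ᵥ a.2) * t ^ 2 + (z.1 ⬝ᵥ a.2 + a.1 ⬝ᵥ z.2) * t + z.1 ⬝ᵥ z.2 := by
      simp only [Prod.fst_add, Prod.snd_add, Prod.smul_fst, Prod.smul_snd,
        add_dotProduct, dotProduct_add, smul_dotProduct, dotProduct_smul, smul_eq_mul]
      ring
    rw [expand]; exact hval
  have hlt : L < L ⊔ Submodule.span ℝ {a} := by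
    refine lt_of_le_of_ne le_sup_left ?_
    intro hEq
    apply hmem
    rw [hEq]
    exact Submodule.mem_sup_right (Submodule.mem_span_singleton_self a)
  have : finrank ℝ (L ⊔ Submodule.span ℝ {a} : Submodule ℝ _) ≤ n :=
    finrank_le_of_nonneg _ hq
  have := Submodule.finrank_lt_finrank_of_lt hlt
  omega

end Stmt14Aux

namespace Stmt14Aux
variable {n : ℕ}

/-- finrank of image under a map injective on the submodule -/
lemma finrank_map_eq' {M N : Type*} [AddCommGroup M] [Module ℝ M] [AddCommGroup N]
    [Module ℝ N] [FiniteDimensional ℝ M] (f : M →ₗ[ℝ] N) (P : Submodule ℝ M)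
    (h : ∀ x ∈ P, f x = 0 → x = 0) :
    finrank ℝ (Submodule.map f P) = finrank ℝ P := by
  have hrn := LinearMap.finrank_range_add_finrank_ker (f.domRestrict P)
  rw [LinearMap.range_domRestrict] at hrn
  have hker : LinearMap.ker (f.domRestrict P) = ⊥ := by
    rw [LinearMap.ker_eq_bot']
    intro x hx
    exact Subtype.ext (h x.1 x.2 hx)
  rw [hker] at hrn
  simpa using hrn

noncomputable def ee (k : ℕ) : EuclideanSpace ℝ (Fin k) ≃ₗ[ℝ] (Fin k → ℝ) :=
  WithLp.linearEquiv 2 ℝ (Fin k → ℝ)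

/-- bridge between dotProduct and the Euclidean inner product -/
lemma dot_eq_inner {k : ℕ} (x y : Fin k → ℝ) :
    x ⬝ᵥ y = (inner ℝ ((ee k).symm x) ((ee k).symm y) : ℝ) := by
  simp [dotProduct, PiLp.inner_apply, RCLike.inner_apply, ee, WithLp.linearEquiv,
    mul_comm]

/-- orthogonal complement w.r.t. dotProduct, as a submodule of `Fin k → ℝ` -/
noncomputable def dperp {k : ℕ} (U : Submodule ℝ (Fin k → ℝ)) : Submodule ℝ (Fin k → ℝ) :=
  Submodule.map (ee k).toLinearMap ((Submodule.comap (ee k).toLinearMap U)ᗮ)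

lemma dperp_dot {k : ℕ} (U : Submodule ℝ (Fin k → ℝ)) {c : Fin k → ℝ} (hc : c ∈ dperp U)
    {u : Fin k → ℝ} (hu : u ∈ U) : u ⬝ᵥ c = 0 := by
  rcases hc with ⟨c', hc', rfl⟩
  rw [dot_eq_inner]
  have h1 : (ee k).symm ((ee k).toLinearMap c') = c' := (ee k).symm_apply_apply c'
  rw [show ((ee k).symm ((ee k).toLinearMap c')) = c' from h1]
  apply hc'
  simp only [Submodule.mem_comap]
  have h2 : (ee k).toLinearMap ((ee k).symm u) = u :=
    (ee k).apply_symm_apply u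
  rw [h2]; exact hu

lemma finrank_dperp {k : ℕ} (U : Submodule ℝ (Fin k → ℝ)) :
    finrank ℝ (dperp U) + finrank ℝ U = k := by
  rw [dperp, LinearEquiv.finrank_map_eq]
  have h1 : finrank ℝ (Submodule.comap (ee k).toLinearMap U)
      + finrank ℝ ((Submodule.comap (ee k).toLinearMap U)ᗮ)
      = finrank ℝ (EuclideanSpace ℝ (Fin k)) :=
    Submodule.finrank_add_finrank_orthogonal _
  have h2 : finrank ℝ (Submodule.comap (ee k).toLinearMap U) = finrank ℝ U := by
    rw [Submodule.comap_equiv_eq_map_symm (ee k) U]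
    exact LinearEquiv.finrank_map_eq (ee k).symm U
  rw [finrank_euclideanSpace_fin] at h1
  omega

/-- diagonal embedding -/
def diag (k : ℕ) : (Fin k → ℝ) →ₗ[ℝ] ((Fin k → ℝ) × (Fin k → ℝ)) :=
  LinearMap.prod LinearMap.id LinearMap.id

/-- L2: every monotone subspace extends to a monotone subspace of dimension n. -/
lemma exists_extension (L : Submodule ℝ ((Fin n → ℝ) × (Fin n → ℝ)))
    (hL : ∀ z ∈ L, 0 ≤ z.1 ⬝ᵥ z.2) :
    ∃ L' : Submodule ℝ ((Fin n → ℝ) × (Fin n → ℝ)),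
      L ≤ L' ∧ (∀ z ∈ L', 0 ≤ z.1 ⬝ᵥ z.2) ∧ finrank ℝ L' = n := by
  set U : Submodule ℝ (Fin n → ℝ) := Submodule.map (sigma n) L with hU
  set D : Submodule ℝ ((Fin n → ℝ) × (Fin n → ℝ)) :=
    Submodule.map (diag n) (dperp U) with hD
  refine ⟨L ⊔ D, le_sup_left, ?_, ?_⟩
  · intro w hw
    rcases Submodule.mem_sup.mp hw with ⟨z, hz, d, hd, rfl⟩
    rcases hd with ⟨c, hc, rfl⟩
    have hperp : (z.1 + z.2) ⬝ᵥ c = 0 :=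
      dperp_dot U hc ⟨z, hz, rfl⟩
    have hexp : (z + diag n c).1 ⬝ᵥ (z + diag n c).2
        = z.1 ⬝ᵥ z.2 + (z.1 + z.2) ⬝ᵥ c + c ⬝ᵥ c := by
      show (z.1 + c) ⬝ᵥ (z.2 + c) = _
      rw [add_dotProduct, dotProduct_add, dotProduct_add, add_dotProduct]
      rw [dotProduct_comm c z.2]
      ring
    rw [hexp, hperp]
    have := hL z hz
    have := dot_self_nonneg c
    linarith
  · -- dimension count
    have hinf : L ⊓ D = ⊥ := by
      rw [Submodule.eq_bot_iff]
      rintro w ⟨hwL, c, hc, rfl⟩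
      have h2c : (2 : ℝ) • c ∈ U := by
        refine ⟨diag n c, hwL, ?_⟩
        show c + c = (2:ℝ) • c
        funext i; simp [Pi.smul_apply]; ring
      have hd0 := dperp_dot U hc h2c
      rw [smul_dotProduct] at hd0
      have hcc : c ⬝ᵥ c = 0 := by
        simp only [smul_eq_mul] at hd0; linarith
      have hc0 : c = 0 := eq_zero_of_dot_self (le_of_eq hcc)
      rw [hc0]; show diag n (0 : Fin n → ℝ) = 0; simp
    have hsum := Submodule.finrank_sup_add_finrank_inf_eq L D
    rw [hinf] at hsum
    have hD_rank : finrank ℝ D = finrank ℝ (dperp U) := by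
      rw [hD]
      apply finrank_map_eq'
      intro x _ hx
      exact congrArg Prod.fst hx
    have hU_rank : finrank ℝ U = finrank ℝ L := by
      rw [hU]
      apply finrank_map_eq'
      intro x hxL hx
      exact sigma_ker L hL hxL (by simpa using hx)
    have hperp_rank := finrank_dperp U
    simp only [finrank_bot] at hsum
    omega

/-- L3: maximality characterisation. -/
lemma maxChar (L : Submodule ℝ ((Fin n → ℝ) × (Fin n → ℝ))) :
    IsMaxMonotoneSet (L : Set ((Fin n → ℝ) × (Fin n → ℝ))) ↔
      (∀ z ∈ L, 0 ≤ z.1 ⬝ᵥ z.2) ∧ finrank ℝ L = n := by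
  constructor
  · rintro ⟨hmono, hmax⟩
    have hnn : ∀ z ∈ L, 0 ≤ z.1 ⬝ᵥ z.2 := by
      intro z hz
      have := hmono z hz 0 (Submodule.zero_mem L)
      simpa using this
    refine ⟨hnn, le_antisymm (finrank_le_of_nonneg L hnn) ?_⟩
    rcases exists_extension L hnn with ⟨L', hle, hnn', hrank'⟩
    have hsub : L' ≤ L := by
      intro a ha
      apply hmax
      intro b hb
      have : a - b ∈ L' := Submodule.sub_mem L' ha (hle hb)
      have := hnn' _ this
      simpa using this
    calc n = finrank ℝ L' := hrank'.symm
      _ ≤ finrank ℝ L := Submodule.finrank_mono hsub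
  · rintro ⟨hnn, hrank⟩
    constructor
    · intro a ha b hb
      have : a - b ∈ L := Submodule.sub_mem L ha hb
      have := hnn _ this
      simpa using this
    · intro a ha
      exact mem_of_related L hnn (le_of_eq hrank.symm) a ha

end Stmt14Aux
namespace Stmt14Aux

section projMatrix

variable {p : ℕ} (N : Submodule ℝ (Fin p → ℝ))

/-- the comap of `N` in Euclidean space -/
noncomputable def Ne' : Submodule ℝ (EuclideanSpace ℝ (Fin p)) :=
  Submodule.comap (ee p).toLinearMap N

/-- projection onto the orthogonal complement of `N`, as a linear map on `Fin p → ℝ` -/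
noncomputable def projPerp : (Fin p → ℝ) →ₗ[ℝ] (Fin p → ℝ) :=
  (ee p).toLinearMap ∘ₗ ((Ne' N)ᗮ.subtype ∘ₗ (Submodule.orthogonalProjectionOnto (Ne' N)ᗮ).toLinearMap)
    ∘ₗ (ee p).symm.toLinearMap

/-- projection matrix onto the orthogonal complement of `N` -/
noncomputable def projMat : Matrix (Fin p) (Fin p) ℝ :=
  LinearMap.toMatrix' (projPerp N)

lemma projMat_mulVec (u : Fin p → ℝ) : projMat N *ᵥ u = projPerp N u := by
  rw [projMat, ← Matrix.toLin'_apply, Matrix.toLin'_toMatrix']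

lemma finrank_Ne' : finrank ℝ (Ne' N) = finrank ℝ N := by
  rw [Ne', Submodule.comap_equiv_eq_map_symm (ee p) N]
  exact LinearEquiv.finrank_map_eq (ee p).symm N

lemma projMat_selfadj (x y : Fin p → ℝ) :
    (projMat N *ᵥ x) ⬝ᵥ y = x ⬝ᵥ (projMat N *ᵥ y) := by
  rw [projMat_mulVec, projMat_mulVec, dot_eq_inner, dot_eq_inner]
  show (inner ℝ ((ee p).symm ((ee p) _)) ((ee p).symm y) : ℝ)
    = inner ℝ ((ee p).symm x) ((ee p).symm ((ee p) _))
  rw [(ee p).symm_apply_apply, (ee p).symm_apply_apply]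

  exact Submodule.inner_starProjection_left_eq_right _ _ _

lemma projMat_transpose : (projMat N)ᵀ = projMat N := by
  ext i j
  have h1 : (projMat N)ᵀ i j = (projMat N *ᵥ Pi.single i 1) j := by
    rw [Matrix.mulVec_single]; simp [Matrix.transpose_apply]
  have h2 : projMat N i j = (projMat N *ᵥ Pi.single j 1) i := by
    rw [Matrix.mulVec_single]; simp
  rw [h1, h2]
  have := projMat_selfadj N (Pi.single i 1) (Pi.single j 1)
  rw [dotProduct_comm] at this
  -- this : (Pi.single j 1) ⬝ᵥ (projMat N *ᵥ Pi.single i 1) = (Pi.single i 1) ⬝ᵥ (projMat N *ᵥ Pi.single j 1)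
  simpa [single_dotProduct, dotProduct_single] using this

lemma projMat_mulVec_eq_zero_iff (u : Fin p → ℝ) [FiniteDimensional ℝ (EuclideanSpace ℝ (Fin p))] :
    projMat N *ᵥ u = 0 ↔ u ∈ N := by
  rw [projMat_mulVec, projPerp]
  simp only [LinearMap.coe_comp, Function.comp_apply, LinearEquiv.coe_coe,
    ContinuousLinearMap.coe_coe, Submodule.coe_subtype]
  constructor
  · intro h
    have h0 : ((Submodule.orthogonalProjectionOnto (Ne' N)ᗮ) ((ee p).symm u) : EuclideanSpace ℝ (Fin p)) = 0 := by
      have := congrArg (ee p).symm h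
      rw [(ee p).symm_apply_apply] at this
      simpa using this
    have : (ee p).symm u ∈ ((Ne' N)ᗮ)ᗮ := by
      rw [← Submodule.orthogonalProjectionOnto_eq_zero_iff]
      exact Subtype.ext h0
    rw [Submodule.orthogonal_orthogonal] at this
    have : (ee p) ((ee p).symm u) ∈ N := this
    rwa [(ee p).apply_symm_apply] at this
  · intro hu
    have : (ee p).symm u ∈ Ne' N := by
      show (ee p) ((ee p).symm u) ∈ N
      rwa [(ee p).apply_symm_apply]
    have h0 : (Submodule.orthogonalProjectionOnto (Ne' N)ᗮ) ((ee p).symm u) = 0 := by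
      rw [Submodule.orthogonalProjectionOnto_eq_zero_iff, Submodule.orthogonal_orthogonal]
      exact this
    rw [h0]
    simp

lemma projMat_range_dot {u : Fin p → ℝ} (hu : u ∈ LinearMap.range (projMat N).mulVecLin)
    {y : Fin p → ℝ} (hy : y ∈ N) : u ⬝ᵥ y = 0 := by
  rcases hu with ⟨v, rfl⟩
  have : (projMat N).mulVecLin v = projMat N *ᵥ v := rfl
  rw [this, projMat_mulVec, dot_eq_inner]
  rw [projPerp]
  simp only [LinearMap.coe_comp, Function.comp_apply, LinearEquiv.coe_coe,
    ContinuousLinearMap.coe_coe, Submodule.coe_subtype]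
  rw [show ((ee p).symm ((ee p) ((Submodule.orthogonalProjectionOnto (Ne' N)ᗮ) ((ee p).symm v) : EuclideanSpace ℝ (Fin p))))
      = ((Submodule.orthogonalProjectionOnto (Ne' N)ᗮ) ((ee p).symm v) : EuclideanSpace ℝ (Fin p)) from (ee p).symm_apply_apply _]
  have hmem : ((Submodule.orthogonalProjectionOnto (Ne' N)ᗮ) ((ee p).symm v) : EuclideanSpace ℝ (Fin p)) ∈ (Ne' N)ᗮ :=
    Submodule.coe_mem _
  have hy' : (ee p).symm y ∈ Ne' N := by
    show (ee p) ((ee p).symm y) ∈ N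
    rwa [(ee p).apply_symm_apply]
  rw [real_inner_comm]
  exact hmem _ hy'

lemma projMat_rank : (projMat N).rank + finrank ℝ N = p := by
  have hr : LinearMap.range (projMat N).mulVecLin
      = Submodule.map (ee p).toLinearMap (Ne' N)ᗮ := by
    apply le_antisymm
    · rintro _ ⟨v, rfl⟩
      refine ⟨((Submodule.orthogonalProjectionOnto (Ne' N)ᗮ) ((ee p).symm v) : EuclideanSpace ℝ (Fin p)),
        Submodule.coe_mem _, ?_⟩
      show (ee p) _ = (projMat N).mulVecLin v
      rw [show (projMat N).mulVecLin v = projMat N *ᵥ v from rfl, projMat_mulVec]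
      rfl
    · rintro _ ⟨w, hw, rfl⟩
      refine ⟨(ee p) w, ?_⟩
      show projMat N *ᵥ ((ee p) w) = _
      rw [projMat_mulVec, projPerp]
      simp only [LinearMap.coe_comp, Function.comp_apply, LinearEquiv.coe_coe,
        ContinuousLinearMap.coe_coe, Submodule.coe_subtype]
      rw [(ee p).symm_apply_apply]
      have hpw : ((Submodule.orthogonalProjectionOnto (Ne' N)ᗮ) w : EuclideanSpace ℝ (Fin p)) = w :=
        Submodule.starProjection_eq_self_iff.mpr hw
      rw [hpw]
  have : (projMat N).rank = finrank ℝ ((Ne' N)ᗮ) := by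
    show finrank ℝ (LinearMap.range (projMat N).mulVecLin) = _
    rw [hr]
    exact LinearEquiv.finrank_map_eq (ee p) _
  rw [this]
  have h1 := Submodule.finrank_add_finrank_orthogonal (Ne' N)
  rw [finrank_euclideanSpace_fin, finrank_Ne'] at h1
  omega

end projMatrix
end Stmt14Aux
namespace Stmt14Aux

variable {n : ℕ}

lemma dot_mulVec_left {m k : ℕ} (A : Matrix (Fin m) (Fin k) ℝ) (u : Fin m → ℝ) (x : Fin k → ℝ) :
    (Aᵀ *ᵥ u) ⬝ᵥ x = u ⬝ᵥ (A *ᵥ x) := by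
  rw [Matrix.mulVec_transpose, ← Matrix.dotProduct_mulVec]

lemma mem_of_cross_pos (L : Submodule ℝ ((Fin n → ℝ) × (Fin n → ℝ)))
    (hL : ∀ z ∈ L, 0 ≤ z.1 ⬝ᵥ z.2) (hdim : n ≤ finrank ℝ L)
    (w : (Fin n → ℝ) × (Fin n → ℝ))
    (hc : ∀ z ∈ L, w.1 ⬝ᵥ z.2 + z.1 ⬝ᵥ w.2 = 0) (hq : 0 ≤ w.1 ⬝ᵥ w.2) : w ∈ L := by
  apply mem_of_related L hL hdim w
  intro z hz
  have hexp : (w.1 - z.1) ⬝ᵥ (w.2 - z.2)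
      = w.1 ⬝ᵥ w.2 - (w.1 ⬝ᵥ z.2 + z.1 ⬝ᵥ w.2) + z.1 ⬝ᵥ z.2 := by
    rw [sub_dotProduct, dotProduct_sub, dotProduct_sub]; ring
  rw [hexp, hc z hz]
  have := hL z hz; linarith

lemma mem_of_cross_neg (R : Submodule ℝ ((Fin n → ℝ) × (Fin n → ℝ)))
    (hR : ∀ z ∈ R, z.1 ⬝ᵥ z.2 ≤ 0) (hdim : n ≤ finrank ℝ R)
    (w : (Fin n → ℝ) × (Fin n → ℝ))
    (hc : ∀ z ∈ R, w.1 ⬝ᵥ z.2 + z.1 ⬝ᵥ w.2 = 0) (hq : w.1 ⬝ᵥ w.2 ≤ 0) : w ∈ R := by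
  set R' := Submodule.map (negSnd n).toLinearMap R with hR'
  have hR'nn : ∀ z ∈ R', 0 ≤ z.1 ⬝ᵥ z.2 := by
    rintro _ ⟨z, hz, rfl⟩
    have := hR z hz
    show 0 ≤ z.1 ⬝ᵥ (-z.2)
    rw [dotProduct_neg]; linarith
  have hdim' : n ≤ finrank ℝ R' := by
    rw [hR', LinearEquiv.finrank_map_eq (negSnd n) R]; exact hdim
  have hw' : (w.1, -w.2) ∈ R' := by
    apply mem_of_cross_pos R' hR'nn hdim' (w.1, -w.2)
    · rintro _ ⟨z, hz, rfl⟩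
      show w.1 ⬝ᵥ (-z.2) + z.1 ⬝ᵥ (-w.2) = 0
      rw [dotProduct_neg, dotProduct_neg, ← neg_add, hc z hz, neg_zero]
    · show 0 ≤ w.1 ⬝ᵥ (-w.2)
      rw [dotProduct_neg]; linarith
  rcases hw' with ⟨z, hz, hzw⟩
  have hzw' : (z.1, -z.2) = (w.1, -w.2) := hzw
  have h1 : z.1 = w.1 := (Prod.ext_iff.mp hzw').1
  have h2 : -z.2 = -w.2 := (Prod.ext_iff.mp hzw').2
  have h2' : z.2 = w.2 := by
    have := congrArg Neg.neg h2; simpa using this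
  have hzw2 : z = w := Prod.ext h1 h2'
  rwa [← hzw2]

/-- rank formula for submodules containing the kernel -/
lemma finrank_eq_map_add_ker {M N : Type*} [AddCommGroup M] [Module ℝ M] [AddCommGroup N]
    [Module ℝ N] [FiniteDimensional ℝ M] (f : M →ₗ[ℝ] N) (W : Submodule ℝ M)
    (h : LinearMap.ker f ≤ W) :
    finrank ℝ W = finrank ℝ (Submodule.map f W) + finrank ℝ (LinearMap.ker f) := by
  have hrn := LinearMap.finrank_range_add_finrank_ker (f.domRestrict W)
  rw [LinearMap.range_domRestrict] at hrn
  have hker : finrank ℝ (LinearMap.ker (f.domRestrict W)) = finrank ℝ (LinearMap.ker f) := by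
    have heq : LinearMap.ker (f.domRestrict W) = Submodule.comap W.subtype (LinearMap.ker f) := by
      ext x; simp [LinearMap.mem_ker, LinearMap.domRestrict_apply]
    rw [heq]
    exact (Submodule.comapSubtypeEquivOfLe h).finrank_eq
  omega

/-- the key quadratic identity -/
lemma quad_id {n p : ℕ} (A B : Matrix (Fin p) (Fin n) ℝ) (M : Matrix (Fin p) (Fin p) ℝ)
    (v : Fin p → ℝ) :
    v ⬝ᵥ ((Mᵀ * (A * Bᵀ + B * Aᵀ) * M) *ᵥ v)
      = 2 * ((Aᵀ *ᵥ (M *ᵥ v)) ⬝ᵥ (Bᵀ *ᵥ (M *ᵥ v))) := by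
  set u := M *ᵥ v with hu
  have h1 : (Mᵀ * (A * Bᵀ + B * Aᵀ) * M) *ᵥ v = Mᵀ *ᵥ ((A * Bᵀ + B * Aᵀ) *ᵥ u) := by
    rw [hu, Matrix.mulVec_mulVec, Matrix.mulVec_mulVec, Matrix.mul_assoc]
  rw [h1]
  have h2 : v ⬝ᵥ (Mᵀ *ᵥ ((A * Bᵀ + B * Aᵀ) *ᵥ u)) = u ⬝ᵥ ((A * Bᵀ + B * Aᵀ) *ᵥ u) := by
    rw [← dot_mulVec_left Mᵀ, Matrix.transpose_transpose, hu]
  rw [h2, Matrix.add_mulVec, dotProduct_add]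
  have h3 : u ⬝ᵥ ((A * Bᵀ) *ᵥ u) = (Aᵀ *ᵥ u) ⬝ᵥ (Bᵀ *ᵥ u) := by
    rw [← Matrix.mulVec_mulVec, ← dot_mulVec_left A]
  have h4 : u ⬝ᵥ ((B * Aᵀ) *ᵥ u) = (Bᵀ *ᵥ u) ⬝ᵥ (Aᵀ *ᵥ u) := by
    rw [← Matrix.mulVec_mulVec, ← dot_mulVec_left B]
  rw [h3, h4, dotProduct_comm (Bᵀ *ᵥ u)]
  ring

end Stmt14Aux


open Stmt14Aux in
/-- assuming `G` monotone, a linear relation `G̃ ⊇ G` is maximally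
monotone iff there is `M ∈ ℝ^{p×p}` of rank `n` with `Mᵀ(ABᵀ + BAᵀ)M` negative
semidefinite and `gra G̃ = {(x,x*) : Mᵀ(Ax + Bx*) = 0}`. -/
theorem stmt14 {n p : ℕ} (A B : Matrix (Fin p) (Fin n) ℝ)
    (hrank : (Matrix.fromCols A B).rank = p)
    (hmono : IsMonotoneSet {q : (Fin n → ℝ) × (Fin n → ℝ) | A *ᵥ q.1 + B *ᵥ q.2 = 0})
    (Gt : Submodule ℝ ((Fin n → ℝ) × (Fin n → ℝ)))
    (hext : {q : (Fin n → ℝ) × (Fin n → ℝ) | A *ᵥ q.1 + B *ᵥ q.2 = 0} ⊆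
      (Gt : Set ((Fin n → ℝ) × (Fin n → ℝ)))) :
    IsMaxMonotoneSet (Gt : Set ((Fin n → ℝ) × (Fin n → ℝ))) ↔
      ∃ M : Matrix (Fin p) (Fin p) ℝ, M.rank = n ∧
        (-(Mᵀ * (A * Bᵀ + B * Aᵀ) * M)).PosSemidef ∧
        (Gt : Set ((Fin n → ℝ) × (Fin n → ℝ))) =
          {q : (Fin n → ℝ) × (Fin n → ℝ) | Mᵀ *ᵥ (A *ᵥ q.1 + B *ᵥ q.2) = 0} := by
  classical
  set φ : ((Fin n → ℝ) × (Fin n → ℝ)) →ₗ[ℝ] (Fin p → ℝ) :=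
    A.mulVecLin.comp (LinearMap.fst ℝ _ _) + B.mulVecLin.comp (LinearMap.snd ℝ _ _) with hφdef
  have hφ_apply : ∀ z : (Fin n → ℝ) × (Fin n → ℝ), φ z = A *ᵥ z.1 + B *ᵥ z.2 := fun z => rfl
  have hφ_surj : Function.Surjective φ := by
    have htop : LinearMap.range (Matrix.fromCols A B).mulVecLin = ⊤ := by
      apply Submodule.eq_top_of_finrank_eq
      show (Matrix.fromCols A B).rank = _
      rw [hrank, Module.finrank_fin_fun]
    intro y
    have hy : y ∈ LinearMap.range (Matrix.fromCols A B).mulVecLin := by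
      rw [htop]; trivial
    rcases hy with ⟨x, hx⟩
    refine ⟨(x ∘ Sum.inl, x ∘ Sum.inr), ?_⟩
    rw [hφ_apply, ← Matrix.fromCols_mulVec_sumElim,
      show (x ∘ Sum.inl) ⊕ᵥ (x ∘ Sum.inr) = x from Sum.elim_comp_inl_inr x]
    exact hx
  have hE : finrank ℝ ((Fin n → ℝ) × (Fin n → ℝ)) = n + n := by
    rw [Module.finrank_prod, Module.finrank_fin_fun]
  have hkerφ : finrank ℝ (LinearMap.ker φ) + p = n + n := by
    have := LinearMap.finrank_range_add_finrank_ker φ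
    rw [LinearMap.range_eq_top.mpr hφ_surj] at this
    rw [finrank_top, Module.finrank_fin_fun] at this
    omega
  constructor
  · -- forward direction
    intro hmax
    obtain ⟨hnn, hdim⟩ := (maxChar Gt).mp hmax
    have hkerle : LinearMap.ker φ ≤ Gt := by
      intro z hz
      apply hext
      show A *ᵥ z.1 + B *ᵥ z.2 = 0
      rw [← hφ_apply]
      exact hz
    set N : Submodule ℝ (Fin p → ℝ) := Submodule.map φ Gt with hNdef
    have hNdim : finrank ℝ Gt = finrank ℝ N + finrank ℝ (LinearMap.ker φ) :=
      finrank_eq_map_add_ker φ Gt hkerle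
    have hrkN := projMat_rank N
    refine ⟨projMat N, by omega, ?_, ?_⟩
    · -- negative semidefiniteness
      have key : ∀ u ∈ LinearMap.range (projMat N).mulVecLin,
          (Aᵀ *ᵥ u) ⬝ᵥ (Bᵀ *ᵥ u) ≤ 0 := by
        intro u hu
        by_contra hpos
        push_neg at hpos
        set r : (Fin n → ℝ) × (Fin n → ℝ) := (Bᵀ *ᵥ u, Aᵀ *ᵥ u) with hrdef
        have hrGt : r ∈ Gt := by
          apply mem_of_cross_pos Gt hnn (le_of_eq hdim.symm) r
          · intro z hz
            show (Bᵀ *ᵥ u) ⬝ᵥ z.2 + z.1 ⬝ᵥ (Aᵀ *ᵥ u) = 0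
            rw [dot_mulVec_left, dotProduct_comm z.1, dot_mulVec_left,
              ← dotProduct_add]
            rw [show B *ᵥ z.2 + A *ᵥ z.1 = φ z by rw [hφ_apply]; ring]
            exact projMat_range_dot N hu ⟨z, hz, rfl⟩
          · show 0 ≤ (Bᵀ *ᵥ u) ⬝ᵥ (Aᵀ *ᵥ u)
            rw [dotProduct_comm]
            exact le_of_lt hpos
        have hφr : u ⬝ᵥ (φ r) = 0 := projMat_range_dot N hu ⟨r, hrGt, rfl⟩
        rw [hφ_apply] at hφr
        have hexp : u ⬝ᵥ (A *ᵥ r.1 + B *ᵥ r.2) = 2 * ((Aᵀ *ᵥ u) ⬝ᵥ (Bᵀ *ᵥ u)) := by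
          rw [dotProduct_add, ← dot_mulVec_left A, ← dot_mulVec_left B]
          show (Aᵀ *ᵥ u) ⬝ᵥ (Bᵀ *ᵥ u) + (Bᵀ *ᵥ u) ⬝ᵥ (Aᵀ *ᵥ u) = _
          rw [dotProduct_comm (Bᵀ *ᵥ u)]
          ring
        rw [hexp] at hφr
        linarith
      refine Matrix.posSemidef_iff_dotProduct_mulVec.mpr ⟨?_, ?_⟩
      · -- hermitian
        have hconj : ∀ (C : Matrix (Fin p) (Fin p) ℝ), Cᴴ = Cᵀ := by
          intro C; ext i j; simp [Matrix.conjTranspose_apply]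
        show (-((projMat N)ᵀ * (A * Bᵀ + B * Aᵀ) * projMat N))ᴴ = _
        rw [hconj, Matrix.transpose_neg, Matrix.transpose_mul, Matrix.transpose_mul,
          Matrix.transpose_transpose, Matrix.transpose_add, Matrix.transpose_mul,
          Matrix.transpose_mul, Matrix.transpose_transpose, Matrix.transpose_transpose]
        rw [show B * Aᵀ + A * Bᵀ = A * Bᵀ + B * Aᵀ from add_comm _ _]
        rw [Matrix.mul_assoc]
      · intro x
        have hx := key ((projMat N).mulVecLin x) ⟨x, rfl⟩
        have hq := quad_id A B (projMat N) x
        have hmv : (projMat N).mulVecLin x = projMat N *ᵥ x := rfl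
        rw [hmv] at hx
        have : 0 ≤ x ⬝ᵥ ((-((projMat N)ᵀ * (A * Bᵀ + B * Aᵀ) * projMat N)) *ᵥ x) := by
          rw [Matrix.neg_mulVec, dotProduct_neg, hq]
          linarith
        simpa using this
    · -- set equality
      ext z
      show z ∈ (Gt : Set _) ↔ (projMat N)ᵀ *ᵥ (A *ᵥ z.1 + B *ᵥ z.2) = 0
      rw [show (projMat N)ᵀ = projMat N from projMat_transpose N,
        projMat_mulVec_eq_zero_iff N, ← hφ_apply]
      constructor
      · intro hz
        exact ⟨z, hz, rfl⟩
      · intro hz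
        have hGtcomap : Gt = Submodule.comap φ N := by
          apply Submodule.eq_of_le_of_finrank_le
          · exact Submodule.le_comap_map φ Gt
          · have hker2 : LinearMap.ker φ ≤ Submodule.comap φ N := by
              intro w hw
              show φ w ∈ N
              rw [LinearMap.mem_ker.mp hw]
              exact Submodule.zero_mem N
            have h1 : finrank ℝ (Submodule.comap φ N)
                = finrank ℝ (Submodule.map φ (Submodule.comap φ N))
                  + finrank ℝ (LinearMap.ker φ) :=
              finrank_eq_map_add_ker φ _ hker2
            have h2 : Submodule.map φ (Submodule.comap φ N) = N :=
              Submodule.map_comap_eq_self (by rw [LinearMap.range_eq_top.mpr hφ_surj]; exact le_top)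
            rw [h2] at h1
            omega
        rw [hGtcomap]
        exact hz
  · -- backward direction
    rintro ⟨M, hrkM, hpsd, hset⟩
    have hGtK : Gt = LinearMap.ker (Mᵀ.mulVecLin ∘ₗ φ) := by
      apply SetLike.coe_injective
      rw [hset]
      ext z
      show Mᵀ *ᵥ (A *ᵥ z.1 + B *ᵥ z.2) = 0 ↔ z ∈ LinearMap.ker (Mᵀ.mulVecLin ∘ₗ φ)
      rw [LinearMap.mem_ker, LinearMap.comp_apply, hφ_apply]
      rfl
    have hdimGt : finrank ℝ Gt = n := by
      rw [hGtK]
      have hrn := LinearMap.finrank_range_add_finrank_ker (Mᵀ.mulVecLin ∘ₗ φ)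
      rw [LinearMap.range_comp, LinearMap.range_eq_top.mpr hφ_surj, Submodule.map_top] at hrn
      have : finrank ℝ (LinearMap.range Mᵀ.mulVecLin) = n := by
        show Mᵀ.rank = n
        rw [Matrix.rank_transpose]; exact hrkM
      rw [this, hE] at hrn
      omega
    apply (maxChar Gt).mpr
    refine ⟨?_, hdimGt⟩
    intro z hz
    by_contra hneg
    push_neg at hneg
    have hz' : Mᵀ *ᵥ (A *ᵥ z.1 + B *ᵥ z.2) = 0 := by
      have : z ∈ (Gt : Set _) := hz
      rw [hset] at this
      exact this
    set τ : (Fin p → ℝ) →ₗ[ℝ] ((Fin n → ℝ) × (Fin n → ℝ)) :=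
      LinearMap.prod Aᵀ.mulVecLin Bᵀ.mulVecLin with hτdef
    have hτ_apply : ∀ u, τ u = (Aᵀ *ᵥ u, Bᵀ *ᵥ u) := fun u => rfl
    set R : Submodule ℝ ((Fin n → ℝ) × (Fin n → ℝ)) :=
      Submodule.map τ (LinearMap.range M.mulVecLin) with hRdef
    have hτinj : ∀ u, τ u = 0 → u = 0 := by
      intro u hu
      have hpair : (Aᵀ *ᵥ u, Bᵀ *ᵥ u) = ((0 : Fin n → ℝ), (0 : Fin n → ℝ)) := hu
      have hA : Aᵀ *ᵥ u = 0 := (Prod.ext_iff.mp hpair).1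
      have hB : Bᵀ *ᵥ u = 0 := (Prod.ext_iff.mp hpair).2
      rcases hφ_surj u with ⟨w, hw⟩
      have hdot : u ⬝ᵥ u = 0 := by
        calc u ⬝ᵥ u = u ⬝ᵥ (φ w) := by rw [hw]
          _ = 0 := by
            rw [hφ_apply, dotProduct_add, ← dot_mulVec_left A, ← dot_mulVec_left B,
              hA, hB]
            simp
      exact eq_zero_of_dot_self (le_of_eq hdot)
    have hRnp : ∀ r ∈ R, r.1 ⬝ᵥ r.2 ≤ 0 := by
      rintro _ ⟨u, ⟨v, rfl⟩, rfl⟩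
      show (Aᵀ *ᵥ (M.mulVecLin v)) ⬝ᵥ (Bᵀ *ᵥ (M.mulVecLin v)) ≤ 0
      have hmv : M.mulVecLin v = M *ᵥ v := rfl
      rw [hmv]
      have hq := quad_id A B M v
      have hps : 0 ≤ v ⬝ᵥ ((-(Mᵀ * (A * Bᵀ + B * Aᵀ) * M)) *ᵥ v) := by
        have := hpsd.dotProduct_mulVec_nonneg v
        simpa using this
      rw [Matrix.neg_mulVec, dotProduct_neg] at hps
      linarith
    have hRdim : finrank ℝ R = n := by
      rw [hRdef]
      rw [finrank_map_eq' τ _ (fun x _ hx => hτinj x hx)]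
      show M.rank = n
      exact hrkM
    have hwR : (z.2, z.1) ∈ R := by
      apply mem_of_cross_neg R hRnp (le_of_eq hRdim.symm)
      · rintro _ ⟨u, ⟨v, rfl⟩, rfl⟩
        show z.2 ⬝ᵥ (Bᵀ *ᵥ (M.mulVecLin v)) + (Aᵀ *ᵥ (M.mulVecLin v)) ⬝ᵥ z.1 = 0
        have hmv : M.mulVecLin v = M *ᵥ v := rfl
        rw [hmv, dotProduct_comm z.2, dot_mulVec_left, dot_mulVec_left,
          ← dotProduct_add,
          show B *ᵥ z.2 + A *ᵥ z.1 = A *ᵥ z.1 + B *ᵥ z.2 from add_comm _ _]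
        have hMv : (M *ᵥ v) ⬝ᵥ (A *ᵥ z.1 + B *ᵥ z.2)
            = v ⬝ᵥ (Mᵀ *ᵥ (A *ᵥ z.1 + B *ᵥ z.2)) := by
          rw [← dot_mulVec_left Mᵀ, Matrix.transpose_transpose]
        rw [hMv, hz']
        simp
      · show z.2 ⬝ᵥ z.1 ≤ 0
        rw [dotProduct_comm]
        linarith
    rcases hwR with ⟨u, ⟨v, rfl⟩, huz⟩
    have hpair : (Aᵀ *ᵥ (M *ᵥ v), Bᵀ *ᵥ (M *ᵥ v)) = (z.2, z.1) := huz
    have h2 : z.2 = Aᵀ *ᵥ (M *ᵥ v) := ((Prod.ext_iff.mp hpair).1).symm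
    have h1 : z.1 = Bᵀ *ᵥ (M *ᵥ v) := ((Prod.ext_iff.mp hpair).2).symm
    have hqz : z.1 ⬝ᵥ z.2 = (Aᵀ *ᵥ (M *ᵥ v)) ⬝ᵥ (Bᵀ *ᵥ (M *ᵥ v)) := by
      rw [h1, h2, dotProduct_comm]
    have hzero : (Mᵀ * (A * Bᵀ + B * Aᵀ) * M) *ᵥ v = 0 := by
      have e1 : Mᵀ *ᵥ (A *ᵥ z.1 + B *ᵥ z.2) = (Mᵀ * (A * Bᵀ + B * Aᵀ) * M) *ᵥ v := by
        rw [h1, h2]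
        simp only [Matrix.mulVec_mulVec, Matrix.mulVec_add, Matrix.add_mulVec,
          Matrix.mul_add, Matrix.add_mul, Matrix.mul_assoc]
      have hzz := hz'
      rw [e1] at hzz
      exact hzz
    have hfin := quad_id A B M v
    rw [hzero, dotProduct_zero] at hfin
    rw [hqz] at hneg
    linarith
end

section
/- Let n, p ∈ ℕ, let A, B ∈ ℝ^{p×n}, assume the p×2n matrix (A B) has rank p, and let G be the linear relation with graph gra G = {(x,x*) ∈ ℝⁿ × ℝⁿ : Ax + Bx* = 0}. Then G is monotone if and only if for all y, y* ∈ ℝⁿ with (A + B)y + (B − A)y* = 0 one has ‖y‖² − ‖y*‖² ≥ 0. Consequently, if G is monotone then the p×n matrix B − A has rank n (full column rank). -/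
open Matrix Pointwise

/-- `G` is monotone iff `‖y‖² − ‖y*‖² ≥ 0` whenever
`(A + B)y + (B − A)y* = 0`; consequently, if `G` is monotone then `B − A`
has full column rank `n`. -/
theorem stmt15 {n p : ℕ} (A B : Matrix (Fin p) (Fin n) ℝ)
    (hrank : (Matrix.fromCols A B).rank = p) :
    (IsMonotoneSet {q : (Fin n → ℝ) × (Fin n → ℝ) | A *ᵥ q.1 + B *ᵥ q.2 = 0} ↔
      ∀ y ys : Fin n → ℝ, (A + B) *ᵥ y + (B - A) *ᵥ ys = 0 →
        0 ≤ y ⬝ᵥ y - ys ⬝ᵥ ys) ∧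
    (IsMonotoneSet {q : (Fin n → ℝ) × (Fin n → ℝ) | A *ᵥ q.1 + B *ᵥ q.2 = 0} →
      (B - A).rank = n) := by
  have hiff : IsMonotoneSet {q : (Fin n → ℝ) × (Fin n → ℝ) | A *ᵥ q.1 + B *ᵥ q.2 = 0} ↔
      ∀ y ys : Fin n → ℝ, (A + B) *ᵥ y + (B - A) *ᵥ ys = 0 →
        0 ≤ y ⬝ᵥ y - ys ⬝ᵥ ys := by
    constructor
    · intro hmono y ys hc
      have hmem : ((y - ys, y + ys) : (Fin n → ℝ) × (Fin n → ℝ)) ∈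
          {q : (Fin n → ℝ) × (Fin n → ℝ) | A *ᵥ q.1 + B *ᵥ q.2 = 0} := by
        simp only [Set.mem_setOf_eq, Matrix.mulVec_sub, Matrix.mulVec_add]
        rw [Matrix.add_mulVec, Matrix.sub_mulVec] at hc
        rw [← hc]; abel
      have h0 : ((0, 0) : (Fin n → ℝ) × (Fin n → ℝ)) ∈
          {q : (Fin n → ℝ) × (Fin n → ℝ) | A *ᵥ q.1 + B *ᵥ q.2 = 0} := by
        simp
      have := hmono _ hmem _ h0
      simp only [sub_zero] at this
      have hexp : (y - ys) ⬝ᵥ (y + ys) = y ⬝ᵥ y - ys ⬝ᵥ ys := by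
        rw [sub_dotProduct, dotProduct_add, dotProduct_add,
          dotProduct_comm ys y]
        ring
      linarith [hexp ▸ this]
    · intro h a ha b hb
      set x := a.1 - b.1 with hx
      set xs := a.2 - b.2 with hxs
      simp only [Set.mem_setOf_eq] at ha hb
      have hc : A *ᵥ x + B *ᵥ xs = 0 := by
        have hd : A *ᵥ x + B *ᵥ xs = (A *ᵥ a.1 + B *ᵥ a.2) - (A *ᵥ b.1 + B *ᵥ b.2) := by
          simp only [hx, hxs, Matrix.mulVec_sub]; abel
        rw [hd, ha, hb, sub_zero]
      have key := h ((2:ℝ)⁻¹ • (x + xs)) ((2:ℝ)⁻¹ • (xs - x)) ?_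
      · have hdot : ((2:ℝ)⁻¹ • (x + xs)) ⬝ᵥ ((2:ℝ)⁻¹ • (x + xs)) -
            ((2:ℝ)⁻¹ • (xs - x)) ⬝ᵥ ((2:ℝ)⁻¹ • (xs - x)) = x ⬝ᵥ xs := by
          simp only [smul_dotProduct, dotProduct_smul, smul_eq_mul,
            add_dotProduct, dotProduct_add, sub_dotProduct,
            dotProduct_sub, dotProduct_comm xs x]
          ring
        linarith [hdot ▸ key]
      · rw [Matrix.mulVec_smul, Matrix.mulVec_smul, ← smul_add]
        have hid : (A + B) *ᵥ (x + xs) + (B - A) *ᵥ (xs - x)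
            = (2:ℝ) • (A *ᵥ x + B *ᵥ xs) := by
          simp only [Matrix.add_mulVec, Matrix.sub_mulVec, Matrix.mulVec_add,
            Matrix.mulVec_sub, two_smul]
          abel
        rw [hid, hc, smul_zero, smul_zero]
  refine ⟨hiff, fun hmono => ?_⟩
  have h := hiff.mp hmono
  have hinj : Function.Injective (B - A).mulVecLin := by
    rw [← LinearMap.ker_eq_bot, LinearMap.ker_eq_bot']
    intro ys hys
    have hc : (A + B) *ᵥ (0 : Fin n → ℝ) + (B - A) *ᵥ ys = 0 := by
      simpa [Matrix.mulVec_zero, Matrix.sub_mulVec] using hys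
    have hle := h 0 ys hc
    simp only [zero_dotProduct, zero_sub, neg_nonneg] at hle
    have hge : 0 ≤ ys ⬝ᵥ ys :=
      Finset.sum_nonneg fun i _ => mul_self_nonneg (ys i)
    exact dotProduct_self_eq_zero.mp (le_antisymm hle hge)
  rw [Matrix.rank, LinearMap.finrank_range_of_inj hinj]
  simp
end

section
/- Let n, p ∈ ℕ, let A, B ∈ ℝ^{p×n}, assume the p×2n matrix (A B) has rank p, let G be the linear relation with graph gra G = {(x,x*) ∈ ℝⁿ × ℝⁿ : Ax + Bx* = 0}, and assume G is monotone (so that B − A has full column rank and (B−A)ᵀ(B−A) is invertible). Set Q = ((B−A)ᵀ(B−A))⁻¹(B−A)ᵀ(B+A) ∈ ℝ^{n×n}. Then: (a) for every (x,x*) ∈ gra G, writing y = x + x*, one has x = ½(I + Q)y and x* = ½(I − Q)y; and (b) conversely, for every y of the form y = u + u* with (u,u*) ∈ gra G, the pair (½(I + Q)y, ½(I − Q)y) belongs to gra G. -/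
open Matrix Pointwise

/-- The matrix `Q = ((B−A)ᵀ(B−A))⁻¹(B−A)ᵀ(B+A)`. -/
noncomputable def Qmat {n p : ℕ} (A B : Matrix (Fin p) (Fin n) ℝ) :
    Matrix (Fin n) (Fin n) ℝ :=
  ((B - A)ᵀ * (B - A))⁻¹ * (B - A)ᵀ * (B + A)

/-- Minty parametrization: if `G` is monotone, then every
`(x,x*) ∈ gra G` satisfies `x = ½(I + Q)(x + x*)`, `x* = ½(I − Q)(x + x*)`;
and conversely the pair `(½(I + Q)y, ½(I − Q)y)` lies in `gra G` for every
`y = u + u*` with `(u,u*) ∈ gra G`. -/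
theorem stmt16 {n p : ℕ} (A B : Matrix (Fin p) (Fin n) ℝ)
    (hrank : (Matrix.fromCols A B).rank = p)
    (hmono : IsMonotoneSet {q : (Fin n → ℝ) × (Fin n → ℝ) | A *ᵥ q.1 + B *ᵥ q.2 = 0}) :
    (∀ x xs : Fin n → ℝ, A *ᵥ x + B *ᵥ xs = 0 →
      x = (1 / 2 : ℝ) • ((1 + Qmat A B) *ᵥ (x + xs)) ∧
      xs = (1 / 2 : ℝ) • ((1 - Qmat A B) *ᵥ (x + xs))) ∧
    (∀ u us : Fin n → ℝ, A *ᵥ u + B *ᵥ us = 0 →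
      A *ᵥ ((1 / 2 : ℝ) • ((1 + Qmat A B) *ᵥ (u + us))) +
        B *ᵥ ((1 / 2 : ℝ) • ((1 - Qmat A B) *ᵥ (u + us))) = 0) := by
  classical
  set C : Matrix (Fin p) (Fin n) ℝ := B - A with hC
  -- C has trivial kernel, by monotonicity
  have hinj : ∀ v : Fin n → ℝ, C *ᵥ v = 0 → v = 0 := by
    intro v hv
    have hmem : ((v, -v) : (Fin n → ℝ) × (Fin n → ℝ)) ∈
        {q : (Fin n → ℝ) × (Fin n → ℝ) | A *ᵥ q.1 + B *ᵥ q.2 = 0} := by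
      simp only [Set.mem_setOf_eq]
      have : (B - A) *ᵥ v = 0 := hv
      rw [Matrix.sub_mulVec] at this
      rw [Matrix.mulVec_neg]
      linear_combination (norm := module) -this
    have h0 : ((0, 0) : (Fin n → ℝ) × (Fin n → ℝ)) ∈
        {q : (Fin n → ℝ) × (Fin n → ℝ) | A *ᵥ q.1 + B *ᵥ q.2 = 0} := by
      simp [Set.mem_setOf_eq]
    have := hmono _ hmem _ h0
    simp only [sub_zero] at this
    have hle : v ⬝ᵥ v ≤ 0 := by
      have : (0:ℝ) ≤ -(v ⬝ᵥ v) := by simpa using this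
      linarith
    have hge : (0:ℝ) ≤ v ⬝ᵥ v := Finset.sum_nonneg fun i _ => mul_self_nonneg (v i)
    have hz : v ⬝ᵥ v = 0 := le_antisymm hle hge
    exact (dotProduct_self_eq_zero).mp hz
  -- the Gram matrix is invertible
  have hdet : (Cᵀ * C).det ≠ 0 := by
    intro hd
    obtain ⟨v, hvne, hv⟩ := (Matrix.exists_mulVec_eq_zero_iff).2 hd
    have h1 : v ⬝ᵥ ((Cᵀ * C) *ᵥ v) = 0 := by rw [hv]; simp
    rw [← Matrix.mulVec_mulVec] at h1
    have h2 : v ⬝ᵥ (Cᵀ *ᵥ (C *ᵥ v)) = (C *ᵥ v) ⬝ᵥ (C *ᵥ v) := by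
      rw [Matrix.mulVec_transpose, Matrix.dotProduct_mulVec, dotProduct_comm]
    rw [h2] at h1
    have h3 : C *ᵥ v = 0 := (dotProduct_self_eq_zero).mp h1
    exact hvne (hinj v h3)
  have hunit : IsUnit (Cᵀ * C).det := isUnit_iff_ne_zero.mpr hdet
  have hinvmul : (Cᵀ * C)⁻¹ * (Cᵀ * C) = 1 := Matrix.nonsing_inv_mul _ hunit
  -- key identity: Q (x + xs) = x - xs on the graph
  have key : ∀ x xs : Fin n → ℝ, A *ᵥ x + B *ᵥ xs = 0 →
      Qmat A B *ᵥ (x + xs) = x - xs := by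
    intro x xs h
    have key1 : (B + A) *ᵥ (x + xs) = C *ᵥ (x - xs) := by
      rw [hC, Matrix.add_mulVec, Matrix.sub_mulVec, Matrix.mulVec_add,
        Matrix.mulVec_add, Matrix.mulVec_sub, Matrix.mulVec_sub]
      linear_combination (norm := module) (2:ℝ) • h
    have : Qmat A B = ((Cᵀ * C)⁻¹ * Cᵀ) * (B + A) := by
      rw [Qmat, hC]
    rw [this, ← Matrix.mulVec_mulVec, key1, Matrix.mulVec_mulVec,
      Matrix.mul_assoc, hinvmul, Matrix.one_mulVec]
  have main : ∀ x xs : Fin n → ℝ, A *ᵥ x + B *ᵥ xs = 0 →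
      x = (1 / 2 : ℝ) • ((1 + Qmat A B) *ᵥ (x + xs)) ∧
      xs = (1 / 2 : ℝ) • ((1 - Qmat A B) *ᵥ (x + xs)) := by
    intro x xs h
    have hk := key x xs h
    constructor
    · rw [Matrix.add_mulVec, Matrix.one_mulVec, hk]
      module
    · rw [Matrix.sub_mulVec, Matrix.one_mulVec, hk]
      module
  refine ⟨main, ?_⟩
  intro u us h
  obtain ⟨h1, h2⟩ := main u us h
  rw [← h1, ← h2]
  exact h
end

section
/- Let n ∈ ℕ, let A, B ∈ ℝ^{n×n}, assume the n×2n matrix (A B) has rank n, let G be the linear relation with graph gra G = {(x,x*) ∈ ℝⁿ × ℝⁿ : Ax + Bx* = 0}, and assume G is maximally monotone. Then B − A is invertible and gra G = {((B−A)⁻¹By, −(B−A)⁻¹Ay) : y ∈ ℝⁿ}. Consequently dom G = (B−A)⁻¹(ran B) and ran G = (B−A)⁻¹(ran A). -/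
open Matrix Pointwise

/-- if `p = n` and `G` is maximally monotone, then `B − A` is
invertible, `gra G = {((B−A)⁻¹By, −(B−A)⁻¹Ay) : y ∈ ℝⁿ}`,
`dom G = (B−A)⁻¹(ran B)` and `ran G = (B−A)⁻¹(ran A)`. -/
theorem stmt17 {n : ℕ} (A B : Matrix (Fin n) (Fin n) ℝ)
    (hrank : (Matrix.fromCols A B).rank = n)
    (hmax : IsMaxMonotoneSet
      {q : (Fin n → ℝ) × (Fin n → ℝ) | A *ᵥ q.1 + B *ᵥ q.2 = 0}) :
    IsUnit (B - A) ∧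
    {q : (Fin n → ℝ) × (Fin n → ℝ) | A *ᵥ q.1 + B *ᵥ q.2 = 0} =
      Set.range (fun y : Fin n → ℝ =>
        ((B - A)⁻¹ *ᵥ (B *ᵥ y), -((B - A)⁻¹ *ᵥ (A *ᵥ y)))) ∧
    {x : Fin n → ℝ | ∃ xs : Fin n → ℝ, A *ᵥ x + B *ᵥ xs = 0} =
      (fun x => (B - A) *ᵥ x) ⁻¹' Set.range (fun y : Fin n → ℝ => B *ᵥ y) ∧
    {xs : Fin n → ℝ | ∃ x : Fin n → ℝ, A *ᵥ x + B *ᵥ xs = 0} =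
      (fun xs => (B - A) *ᵥ xs) ⁻¹' Set.range (fun y : Fin n → ℝ => A *ᵥ y) := by
  have hmono := hmax.1
  have h0 : ((0 : Fin n → ℝ), (0 : Fin n → ℝ)) ∈
      {q : (Fin n → ℝ) × (Fin n → ℝ) | A *ᵥ q.1 + B *ᵥ q.2 = 0} := by
    simp [Matrix.mulVec_zero]
  -- injectivity of mulVec (B - A)
  have hinj : Function.Injective ((B - A).mulVec) := by
    have hker : ∀ z : Fin n → ℝ, (B - A) *ᵥ z = 0 → z = 0 := by
      intro z hz
      have hmem : ((z, -z) : (Fin n → ℝ) × (Fin n → ℝ)) ∈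
          {q : (Fin n → ℝ) × (Fin n → ℝ) | A *ᵥ q.1 + B *ᵥ q.2 = 0} := by
        have : A *ᵥ z + B *ᵥ (-z) = -((B - A) *ᵥ z) := by
          rw [Matrix.sub_mulVec, Matrix.mulVec_neg]; abel
        simp only [Set.mem_setOf_eq, this, hz, neg_zero]
      have := hmono _ hmem _ h0
      simp only [sub_zero] at this
      have hle : z ⬝ᵥ z ≤ 0 := by
        have : 0 ≤ -(z ⬝ᵥ z) := by simpa [dotProduct_neg] using this
        linarith
      have hz0 : z ⬝ᵥ z = 0 := le_antisymm hle (Finset.sum_nonneg fun i _ => mul_self_nonneg (z i))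
      exact dotProduct_self_eq_zero.mp hz0
    intro u v huv
    have : (B - A) *ᵥ (u - v) = 0 := by
      rw [Matrix.mulVec_sub, huv, sub_self]
    exact sub_eq_zero.mp (hker _ this)
  have hunit : IsUnit (B - A) := Matrix.mulVec_injective_iff_isUnit.mp hinj
  have hdet : IsUnit (B - A).det := (Matrix.isUnit_iff_isUnit_det _).mp hunit
  have h1 : (B - A) * (B - A)⁻¹ = 1 := Matrix.mul_nonsing_inv _ hdet
  have h2 : (B - A)⁻¹ * (B - A) = 1 := Matrix.nonsing_inv_mul _ hdet
  have hkey : A * ((B - A)⁻¹ * B) = B * ((B - A)⁻¹ * A) := by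
    have expand : A * ((B - A)⁻¹ * B) - B * ((B - A)⁻¹ * A)
        = B * ((B - A)⁻¹ * (B - A)) - ((B - A) * (B - A)⁻¹) * B := by noncomm_ring
    have : A * ((B - A)⁻¹ * B) - B * ((B - A)⁻¹ * A) = 0 := by
      rw [expand, h1, h2, Matrix.mul_one, Matrix.one_mul, sub_self]
    exact sub_eq_zero.mp this
  -- inverse cancels on vectors
  have hcancel : ∀ v : Fin n → ℝ, (B - A)⁻¹ *ᵥ ((B - A) *ᵥ v) = v := by
    intro v
    rw [Matrix.mulVec_mulVec, h2, Matrix.one_mulVec]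
  refine ⟨hunit, ?_, ?_, ?_⟩
  · ext ⟨x, xs⟩
    simp only [Set.mem_setOf_eq, Set.mem_range, Prod.mk.injEq, Prod.ext_iff]
    constructor
    · intro h
      refine ⟨x + xs, ?_, ?_⟩
      · have hb : B *ᵥ (x + xs) = (B - A) *ᵥ x := by
          rw [Matrix.mulVec_add, Matrix.sub_mulVec]
          have : B *ᵥ xs = -(A *ᵥ x) := eq_neg_of_add_eq_zero_right h
          rw [this]; abel
        rw [hb, hcancel]
      · have ha : A *ᵥ (x + xs) = -((B - A) *ᵥ xs) := by
          rw [Matrix.mulVec_add, Matrix.sub_mulVec]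
          have : A *ᵥ x = -(B *ᵥ xs) := eq_neg_of_add_eq_zero_left h
          rw [this]; abel
        rw [ha, Matrix.mulVec_neg, hcancel, neg_neg]
    · rintro ⟨y, hy1, hy2⟩
      rw [← hy1, ← hy2]
      rw [Matrix.mulVec_neg, Matrix.mulVec_mulVec, Matrix.mulVec_mulVec,
        Matrix.mulVec_mulVec, Matrix.mulVec_mulVec]
      rw [Matrix.mul_assoc, Matrix.mul_assoc, hkey]
      abel
  · ext x
    simp only [Set.mem_setOf_eq, Set.mem_preimage, Set.mem_range]
    constructor
    · rintro ⟨xs, h⟩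
      refine ⟨x + xs, ?_⟩
      rw [Matrix.mulVec_add, Matrix.sub_mulVec]
      have : B *ᵥ xs = -(A *ᵥ x) := eq_neg_of_add_eq_zero_right h
      rw [this]; abel
    · rintro ⟨y, hy⟩
      refine ⟨y - x, ?_⟩
      rw [Matrix.mulVec_sub, hy, Matrix.sub_mulVec]
      abel
  · ext xs
    simp only [Set.mem_setOf_eq, Set.mem_preimage, Set.mem_range]
    constructor
    · rintro ⟨x, h⟩
      refine ⟨-(x + xs), ?_⟩
      rw [Matrix.mulVec_neg, Matrix.mulVec_add, Matrix.sub_mulVec]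
      have : A *ᵥ x = -(B *ᵥ xs) := eq_neg_of_add_eq_zero_left h
      rw [this]; abel
    · rintro ⟨y, hy⟩
      refine ⟨-(y + xs), ?_⟩
      rw [Matrix.mulVec_neg, Matrix.mulVec_add]
      rw [Matrix.sub_mulVec] at hy
      rw [hy]; abel
end

section
/- Let T: ℝⁿ ⇉ ℝⁿ be a monotone linear relation. Then: (a) the linear relation T₁ with graph gra T₁ = gra T + ({0} × (dom T)^⊥) is maximally monotone and dom T₁ = dom T; and (b) the linear relation T₂ with graph gra T₂ = gra T + ((ran T)^⊥ × {0}) is maximally monotone, gra T ⊆ gra T₂, and ran T₂ = ran T. -/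
open Matrix Pointwise

/-- Domain of a relation given by its graph. -/
def domSet {n : ℕ} (S : Set ((Fin n → ℝ) × (Fin n → ℝ))) : Set (Fin n → ℝ) :=
  {x | ∃ y, (x, y) ∈ S}

/-- Range of a relation given by its graph. -/
def ranSet {n : ℕ} (S : Set ((Fin n → ℝ) × (Fin n → ℝ))) : Set (Fin n → ℝ) :=
  {y | ∃ x, (x, y) ∈ S}

/-- Orthogonal complement of a subset of `ℝⁿ`. -/
def perpSet {n : ℕ} (C : Set (Fin n → ℝ)) : Set (Fin n → ℝ) :=
  {w | ∀ x ∈ C, w ⬝ᵥ x = 0}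

private lemma lin_aux {b c : ℝ} (h : ∀ t : ℝ, 0 ≤ c - t * b) : b = 0 := by
  by_contra hb
  have h1 := h ((c + 1) / b)
  rw [div_mul_cancel₀ _ hb] at h1
  linarith

private lemma quad_aux {c d : ℝ} (h : ∀ t : ℝ, 0 ≤ t ^ 2 * d - t * c) : c = 0 := by
  by_contra hc
  rcases le_or_gt d 0 with hd | hd
  · have h1 := h (1 / c)
    have h2 : (1 / c) * c = 1 := one_div_mul_cancel hc
    nlinarith [mul_nonpos_of_nonneg_of_nonpos (sq_nonneg (1 / c)) hd]
  · have hd' : d ≠ 0 := ne_of_gt hd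
    have h1 := h (c / (2 * d))
    rw [div_pow] at h1
    have h2 : (0:ℝ) < (2*d)^2 := by positivity
    have h3 := mul_nonneg h1 h2.le
    have h4 : c^2 * d - c/(2*d)*c*(2*d)^2 ≥ 0 := by
      calc c^2*d - c/(2*d)*c*(2*d)^2 = (c^2/(2*d)^2*d - c/(2*d)*c)*(2*d)^2 := by
            field_simp
        _ ≥ 0 := h3
    have h5 : c/(2*d)*c*(2*d)^2 = 2*c^2*d := by field_simp
    have hc2 : 0 < c^2 := lt_of_le_of_ne (sq_nonneg c) (Ne.symm (pow_ne_zero 2 hc))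
    nlinarith [mul_pos hc2 hd]

private lemma bidual {n : ℕ} (D : Submodule ℝ (Fin n → ℝ)) {x : Fin n → ℝ}
    (h : ∀ w, (∀ d ∈ D, w ⬝ᵥ d = 0) → w ⬝ᵥ x = 0) : x ∈ D := by
  let e : EuclideanSpace ℝ (Fin n) ≃ₗ[ℝ] (Fin n → ℝ) := WithLp.linearEquiv 2 ℝ (Fin n → ℝ)
  let K : Submodule ℝ (EuclideanSpace ℝ (Fin n)) := D.comap (e : EuclideanSpace ℝ (Fin n) →ₗ[ℝ] (Fin n → ℝ))
  have hinner : ∀ u v : EuclideanSpace ℝ (Fin n), (inner ℝ u v : ℝ) = (e u) ⬝ᵥ (e v) := by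
    intro u v
    simp [PiLp.inner_apply, dotProduct, mul_comm]
    rfl
  have hx : e.symm x ∈ Kᗮᗮ := by
    rw [Submodule.mem_orthogonal]
    intro w hw
    rw [Submodule.mem_orthogonal] at hw
    have hperp : ∀ d ∈ D, (e w) ⬝ᵥ d = 0 := by
      intro d hd
      have hm : e.symm d ∈ K := by simp [K, Submodule.mem_comap, hd]
      have := hw _ hm
      rwa [hinner, LinearEquiv.apply_symm_apply, dotProduct_comm] at this
    have := h _ hperp
    rw [hinner, LinearEquiv.apply_symm_apply]
    exact this
  rw [Submodule.orthogonal_orthogonal] at hx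
  simpa [K, Submodule.mem_comap] using hx

private lemma part_a {n : ℕ} (T : Submodule ℝ ((Fin n → ℝ) × (Fin n → ℝ)))
    (hmono : IsMonotoneSet (T : Set ((Fin n → ℝ) × (Fin n → ℝ)))) :
    IsMaxMonotoneSet ((T : Set ((Fin n → ℝ) × (Fin n → ℝ))) +
        ({(0 : Fin n → ℝ)} ×ˢ perpSet (domSet (T : Set ((Fin n → ℝ) × (Fin n → ℝ)))))) ∧
      domSet ((T : Set ((Fin n → ℝ) × (Fin n → ℝ))) +
          ({(0 : Fin n → ℝ)} ×ˢ perpSet (domSet (T : Set ((Fin n → ℝ) × (Fin n → ℝ)))))) =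
        domSet (T : Set ((Fin n → ℝ) × (Fin n → ℝ))) := by
  classical
  set S : Set ((Fin n → ℝ) × (Fin n → ℝ)) := (T : Set ((Fin n → ℝ) × (Fin n → ℝ))) with hSdef
  set P : Set (Fin n → ℝ) := perpSet (domSet S) with hPdef
  have h0P : (0 : Fin n → ℝ) ∈ P := fun d _ => zero_dotProduct d
  have hmem : ∀ p : (Fin n → ℝ) × (Fin n → ℝ),
      p ∈ S + ({(0 : Fin n → ℝ)} ×ˢ P) ↔ ∃ u ∈ S, ∃ w ∈ P, p = (u.1, u.2 + w) := by
    intro p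
    rw [Set.mem_add]
    constructor
    · rintro ⟨a, ha, q, hq, rfl⟩
      rw [Set.mem_prod, Set.mem_singleton_iff] at hq
      refine ⟨a, ha, q.2, hq.2, ?_⟩
      rw [Prod.ext_iff]
      simp [hq.1]
    · rintro ⟨u, hu, w, hw, rfl⟩
      exact ⟨u, hu, (0, w), Set.mem_prod.mpr ⟨rfl, hw⟩, by rw [Prod.ext_iff]; simp⟩
  have hST : ∀ u ∈ S, u ∈ S + ({(0 : Fin n → ℝ)} ×ˢ P) := by
    intro u hu
    exact (hmem u).mpr ⟨u, hu, 0, h0P, by rw [Prod.ext_iff]; simp⟩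
  refine ⟨⟨?_, ?_⟩, ?_⟩
  · -- monotone
    intro p hp q hq
    rw [hmem] at hp hq
    obtain ⟨u, hu, w, hw, rfl⟩ := hp
    obtain ⟨v, hv, w', hw', rfl⟩ := hq
    have h0 := hmono u hu v hv
    have h1 : u.1 ⬝ᵥ w = 0 := by rw [dotProduct_comm]; exact hw u.1 ⟨u.2, by simpa using hu⟩
    have h2 : u.1 ⬝ᵥ w' = 0 := by rw [dotProduct_comm]; exact hw' u.1 ⟨u.2, by simpa using hu⟩
    have h3 : v.1 ⬝ᵥ w = 0 := by rw [dotProduct_comm]; exact hw v.1 ⟨v.2, by simpa using hv⟩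
    have h4 : v.1 ⬝ᵥ w' = 0 := by rw [dotProduct_comm]; exact hw' v.1 ⟨v.2, by simpa using hv⟩
    have e : ((u.1, u.2 + w).1 - (v.1, v.2 + w').1) ⬝ᵥ ((u.1, u.2 + w).2 - (v.1, v.2 + w').2)
        = (u.1 - v.1) ⬝ᵥ (u.2 - v.2)
          + (u.1 ⬝ᵥ w - u.1 ⬝ᵥ w' - v.1 ⬝ᵥ w + v.1 ⬝ᵥ w') := by
      simp only [dotProduct_sub, sub_dotProduct, dotProduct_add, add_dotProduct]
      ring
    rw [e]
    linarith
  · -- maximal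
    intro p hp
    obtain ⟨x, y⟩ := p
    have hx : x ∈ Submodule.map (LinearMap.fst ℝ (Fin n → ℝ) (Fin n → ℝ)) T := by
      apply bidual
      intro w hwperp
      have hwP : w ∈ P := by
        intro d hd
        obtain ⟨y', hy'⟩ := hd
        exact hwperp d ⟨(d, y'), hy', rfl⟩
      have hlin : ∀ t : ℝ, 0 ≤ x ⬝ᵥ y - t * (x ⬝ᵥ w) := by
        intro t
        have htw : t • w ∈ P := by
          intro d hd
          rw [smul_dotProduct, hwP d hd, smul_eq_mul, mul_zero]
        have hmem0 : ((0 : Fin n → ℝ), t • w) ∈ S + ({(0 : Fin n → ℝ)} ×ˢ P) :=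
          (hmem _).mpr ⟨0, T.zero_mem, t • w, htw, by rw [Prod.ext_iff]; simp⟩
        have h5 := hp _ hmem0
        have e : (x - ((0 : Fin n → ℝ), t • w).1) ⬝ᵥ (y - ((0 : Fin n → ℝ), t • w).2)
            = x ⬝ᵥ y - t * (x ⬝ᵥ w) := by
          simp only [dotProduct_sub, sub_dotProduct, dotProduct_smul, smul_eq_mul,
            dotProduct_zero, zero_dotProduct, sub_zero]
        rw [e] at h5
        exact h5
      rw [dotProduct_comm]
      exact lin_aux hlin
    obtain ⟨u0, hu0, hu0x⟩ := hx
    have hxy0 : (x, u0.2) ∈ S := by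
      have : u0.1 = x := hu0x
      rw [← this]
      simpa [hSdef] using hu0
    have hB : ∀ a ∈ S, a.1 ⬝ᵥ (y - u0.2) = 0 := by
      intro a ha
      apply quad_aux (d := a.1 ⬝ᵥ a.2)
      intro t
      have hmemT : (x + t • a.1, u0.2 + t • a.2) ∈ S := by
        have heq : (x + t • a.1, u0.2 + t • a.2) = (x, u0.2) + t • a := by
          rw [Prod.ext_iff]; constructor <;> simp
        rw [heq]
        exact T.add_mem hxy0 (T.smul_mem t ha)
      have h5 := hp _ (hST _ hmemT)
      have e : (x - (x + t • a.1, u0.2 + t • a.2).1) ⬝ᵥ (y - (x + t • a.1, u0.2 + t • a.2).2)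
          = t ^ 2 * (a.1 ⬝ᵥ a.2) - t * (a.1 ⬝ᵥ (y - u0.2)) := by
        simp only [dotProduct_sub, sub_dotProduct, dotProduct_add, add_dotProduct,
          smul_dotProduct, dotProduct_smul, smul_eq_mul]
        ring
      rw [e] at h5
      exact h5
    have hyP : y - u0.2 ∈ P := by
      intro d hd
      obtain ⟨d', hd'⟩ := hd
      rw [dotProduct_comm]
      exact hB (d, d') hd'
    exact (hmem _).mpr ⟨(x, u0.2), hxy0, y - u0.2, hyP, by rw [Prod.ext_iff]; simp⟩
  · -- dom equality
    ext x
    constructor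
    · rintro ⟨y, hy⟩
      rw [hmem] at hy
      obtain ⟨u, hu, w, hw, heq⟩ := hy
      have hx1 : x = u.1 := (Prod.ext_iff.mp heq).1
      rw [hx1]
      exact ⟨u.2, by simpa using hu⟩
    · rintro ⟨y, hy⟩
      exact ⟨y, hST _ hy⟩

private lemma part_b {n : ℕ} (T : Submodule ℝ ((Fin n → ℝ) × (Fin n → ℝ)))
    (hmono : IsMonotoneSet (T : Set ((Fin n → ℝ) × (Fin n → ℝ)))) :
    IsMaxMonotoneSet ((T : Set ((Fin n → ℝ) × (Fin n → ℝ))) +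
        (perpSet (ranSet (T : Set ((Fin n → ℝ) × (Fin n → ℝ)))) ×ˢ {(0 : Fin n → ℝ)})) ∧
      (T : Set ((Fin n → ℝ) × (Fin n → ℝ))) ⊆
        (T : Set ((Fin n → ℝ) × (Fin n → ℝ))) +
          (perpSet (ranSet (T : Set ((Fin n → ℝ) × (Fin n → ℝ)))) ×ˢ {(0 : Fin n → ℝ)}) ∧
      ranSet ((T : Set ((Fin n → ℝ) × (Fin n → ℝ))) +
          (perpSet (ranSet (T : Set ((Fin n → ℝ) × (Fin n → ℝ)))) ×ˢ {(0 : Fin n → ℝ)})) =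
        ranSet (T : Set ((Fin n → ℝ) × (Fin n → ℝ))) := by
  classical
  set S : Set ((Fin n → ℝ) × (Fin n → ℝ)) := (T : Set ((Fin n → ℝ) × (Fin n → ℝ))) with hSdef
  set Q : Set (Fin n → ℝ) := perpSet (ranSet S) with hQdef
  have h0Q : (0 : Fin n → ℝ) ∈ Q := fun d _ => zero_dotProduct d
  have hmem : ∀ p : (Fin n → ℝ) × (Fin n → ℝ),
      p ∈ S + (Q ×ˢ {(0 : Fin n → ℝ)}) ↔ ∃ u ∈ S, ∃ v ∈ Q, p = (u.1 + v, u.2) := by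
    intro p
    rw [Set.mem_add]
    constructor
    · rintro ⟨a, ha, q, hq, rfl⟩
      rw [Set.mem_prod, Set.mem_singleton_iff] at hq
      refine ⟨a, ha, q.1, hq.1, ?_⟩
      rw [Prod.ext_iff]
      simp [hq.2]
    · rintro ⟨u, hu, v, hv, rfl⟩
      exact ⟨u, hu, (v, 0), Set.mem_prod.mpr ⟨hv, rfl⟩, by rw [Prod.ext_iff]; simp⟩
  have hST : ∀ u ∈ S, u ∈ S + (Q ×ˢ {(0 : Fin n → ℝ)}) := by
    intro u hu
    exact (hmem u).mpr ⟨u, hu, 0, h0Q, by rw [Prod.ext_iff]; simp⟩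
  refine ⟨⟨?_, ?_⟩, hST, ?_⟩
  · -- monotone
    intro p hp q hq
    rw [hmem] at hp hq
    obtain ⟨u, hu, v, hv, rfl⟩ := hp
    obtain ⟨u', hu', v', hv', rfl⟩ := hq
    have h0 := hmono u hu u' hu'
    have h1 : v ⬝ᵥ u.2 = 0 := hv u.2 ⟨u.1, by simpa using hu⟩
    have h2 : v ⬝ᵥ u'.2 = 0 := hv u'.2 ⟨u'.1, by simpa using hu'⟩
    have h3 : v' ⬝ᵥ u.2 = 0 := hv' u.2 ⟨u.1, by simpa using hu⟩
    have h4 : v' ⬝ᵥ u'.2 = 0 := hv' u'.2 ⟨u'.1, by simpa using hu'⟩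
    have e : ((u.1 + v, u.2).1 - (u'.1 + v', u'.2).1) ⬝ᵥ ((u.1 + v, u.2).2 - (u'.1 + v', u'.2).2)
        = (u.1 - u'.1) ⬝ᵥ (u.2 - u'.2)
          + (v ⬝ᵥ u.2 - v ⬝ᵥ u'.2 - v' ⬝ᵥ u.2 + v' ⬝ᵥ u'.2) := by
      simp only [dotProduct_sub, sub_dotProduct, dotProduct_add, add_dotProduct]
      ring
    rw [e]
    linarith
  · -- maximal
    intro p hp
    obtain ⟨x, y⟩ := p
    have hy : y ∈ Submodule.map (LinearMap.snd ℝ (Fin n → ℝ) (Fin n → ℝ)) T := by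
      apply bidual
      intro v hvperp
      have hvQ : v ∈ Q := by
        intro d hd
        obtain ⟨x', hx'⟩ := hd
        exact hvperp d ⟨(x', d), hx', rfl⟩
      have hlin : ∀ t : ℝ, 0 ≤ x ⬝ᵥ y - t * (v ⬝ᵥ y) := by
        intro t
        have htv : t • v ∈ Q := by
          intro d hd
          rw [smul_dotProduct, hvQ d hd, smul_eq_mul, mul_zero]
        have hmem0 : ((t • v : Fin n → ℝ), (0 : Fin n → ℝ)) ∈ S + (Q ×ˢ {(0 : Fin n → ℝ)}) :=
          (hmem _).mpr ⟨0, T.zero_mem, t • v, htv, by rw [Prod.ext_iff]; simp⟩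
        have h5 := hp _ hmem0
        have e : (x - ((t • v : Fin n → ℝ), (0 : Fin n → ℝ)).1) ⬝ᵥ (y - ((t • v : Fin n → ℝ), (0 : Fin n → ℝ)).2)
            = x ⬝ᵥ y - t * (v ⬝ᵥ y) := by
          simp only [dotProduct_sub, sub_dotProduct, smul_dotProduct, smul_eq_mul,
            dotProduct_zero, zero_dotProduct, sub_zero]
        rw [e] at h5
        exact h5
      exact lin_aux hlin
    obtain ⟨u0, hu0, hu0y⟩ := hy
    have hxy0 : (u0.1, y) ∈ S := by
      have : u0.2 = y := hu0y
      rw [← this]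
      simpa [hSdef] using hu0
    have hB : ∀ a ∈ S, (x - u0.1) ⬝ᵥ a.2 = 0 := by
      intro a ha
      apply quad_aux (d := a.1 ⬝ᵥ a.2)
      intro t
      have hmemT : (u0.1 + t • a.1, y + t • a.2) ∈ S := by
        have heq : (u0.1 + t • a.1, y + t • a.2) = (u0.1, y) + t • a := by
          rw [Prod.ext_iff]; constructor <;> simp
        rw [heq]
        exact T.add_mem hxy0 (T.smul_mem t ha)
      have h5 := hp _ (hST _ hmemT)
      have e : (x - (u0.1 + t • a.1, y + t • a.2).1) ⬝ᵥ (y - (u0.1 + t • a.1, y + t • a.2).2)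
          = t ^ 2 * (a.1 ⬝ᵥ a.2) - t * ((x - u0.1) ⬝ᵥ a.2) := by
        simp only [dotProduct_sub, sub_dotProduct, dotProduct_add, add_dotProduct,
          smul_dotProduct, dotProduct_smul, smul_eq_mul]
        ring
      rw [e] at h5
      exact h5
    have hxQ : x - u0.1 ∈ Q := by
      intro d hd
      obtain ⟨d', hd'⟩ := hd
      exact hB (d', d) hd'
    exact (hmem _).mpr ⟨(u0.1, y), hxy0, x - u0.1, hxQ, by rw [Prod.ext_iff]; simp⟩
  · -- ran equality
    ext y
    constructor
    · rintro ⟨x, hx⟩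
      rw [hmem] at hx
      obtain ⟨u, hu, v, hv, heq⟩ := hx
      have hy2 : y = u.2 := (Prod.ext_iff.mp heq).2
      rw [hy2]
      exact ⟨u.1, by simpa using hu⟩
    · rintro ⟨x, hx⟩
      exact ⟨x, hST _ hx⟩


/-- for a monotone linear relation `T`:
(a) `T₁` with `gra T₁ = gra T + ({0} × (dom T)^⊥)` is maximally monotone and
`dom T₁ = dom T`; (b) `T₂` with `gra T₂ = gra T + ((ran T)^⊥ × {0})` is maximally
monotone, `gra T ⊆ gra T₂`, and `ran T₂ = ran T`. -/
theorem stmt18 {n : ℕ} (T : Submodule ℝ ((Fin n → ℝ) × (Fin n → ℝ)))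
    (hmono : IsMonotoneSet (T : Set ((Fin n → ℝ) × (Fin n → ℝ)))) :
    (IsMaxMonotoneSet ((T : Set ((Fin n → ℝ) × (Fin n → ℝ))) +
        ({(0 : Fin n → ℝ)} ×ˢ perpSet (domSet (T : Set ((Fin n → ℝ) × (Fin n → ℝ)))))) ∧
      domSet ((T : Set ((Fin n → ℝ) × (Fin n → ℝ))) +
          ({(0 : Fin n → ℝ)} ×ˢ perpSet (domSet (T : Set ((Fin n → ℝ) × (Fin n → ℝ)))))) =
        domSet (T : Set ((Fin n → ℝ) × (Fin n → ℝ)))) ∧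
    (IsMaxMonotoneSet ((T : Set ((Fin n → ℝ) × (Fin n → ℝ))) +
        (perpSet (ranSet (T : Set ((Fin n → ℝ) × (Fin n → ℝ)))) ×ˢ {(0 : Fin n → ℝ)})) ∧
      (T : Set ((Fin n → ℝ) × (Fin n → ℝ))) ⊆
        (T : Set ((Fin n → ℝ) × (Fin n → ℝ))) +
          (perpSet (ranSet (T : Set ((Fin n → ℝ) × (Fin n → ℝ)))) ×ˢ {(0 : Fin n → ℝ)}) ∧
      ranSet ((T : Set ((Fin n → ℝ) × (Fin n → ℝ))) +
          (perpSet (ranSet (T : Set ((Fin n → ℝ) × (Fin n → ℝ)))) ×ˢ {(0 : Fin n → ℝ)})) =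
        ranSet (T : Set ((Fin n → ℝ) × (Fin n → ℝ)))) := by
  obtain ⟨ha1, ha2⟩ := part_a T hmono
  obtain ⟨hb1, hb2, hb3⟩ := part_b T hmono
  exact ⟨⟨ha1, ha2⟩, hb1, hb2, hb3⟩
end

section
/- Let n, m ∈ ℕ, let C, D ∈ ℝ^{n×m}, and let T be the linear relation with graph gra T = {(Cy, Dy) : y ∈ ℝ^m}; assume T is monotone. Then: (a) the linear relation E₁ with graph gra E₁ = {(Cy, Dy) : y ∈ ℝ^m} + ({0} × ker Cᵀ) is maximally monotone, gra T ⊆ gra E₁, and dom E₁ = dom T = ran C; and (b) the linear relation E₂ with graph gra E₂ = {(Cy, Dy) : y ∈ ℝ^m} + (ker Dᵀ × {0}) is maximally monotone, gra T ⊆ gra E₂, and ran E₂ = ran T = ran D. -/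
open Matrix Pointwise
open RealInnerProductSpace

lemma mv_dot {n m : ℕ} (C : Matrix (Fin n) (Fin m) ℝ) (w : Fin m → ℝ) (u : Fin n → ℝ) :
    (C *ᵥ w) ⬝ᵥ u = w ⬝ᵥ (Cᵀ *ᵥ u) := by
  rw [dotProduct_comm, Matrix.dotProduct_mulVec, ← Matrix.mulVec_transpose,
    dotProduct_comm]

lemma lin_zero (c d : ℝ) (h : ∀ t : ℝ, 0 ≤ c + t * d) : d = 0 := by
  by_contra hd
  have ht := h (-(c + 1) / d)
  rw [div_mul_cancel₀ _ hd] at ht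
  linarith

lemma quad_zero (A B : ℝ) (hB : 0 ≤ B) (h : ∀ t : ℝ, 0 ≤ t * A + t ^ 2 * B) : A = 0 := by
  have hp : (0:ℝ) < B + 1 := by linarith
  have ht := h (-A / (B + 1))
  rw [div_mul_eq_mul_div, div_pow, div_mul_eq_mul_div, ← sub_nonneg] at ht
  have h2 : (0:ℝ) < (B+1)^2 := by positivity
  rw [div_add_div _ _ (ne_of_gt hp) (ne_of_gt h2), sub_zero,
    le_div_iff₀ (by positivity)] at ht
  nlinarith [sq_nonneg A]

lemma mem_range_of_perp_ker {n m : ℕ} (C : Matrix (Fin n) (Fin m) ℝ) (a : Fin n → ℝ)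
    (h : ∀ u : Fin n → ℝ, Cᵀ *ᵥ u = 0 → a ⬝ᵥ u = 0) : ∃ y, C *ᵥ y = a := by
  classical
  let V : Submodule ℝ (EuclideanSpace ℝ (Fin n)) :=
    { carrier := {x | ∃ y : Fin m → ℝ, C *ᵥ y = x}
      add_mem' := by rintro x₁ x₂ ⟨y₁, h₁⟩ ⟨y₂, h₂⟩; exact ⟨y₁ + y₂, by simp [Matrix.mulVec_add, h₁, h₂]⟩
      zero_mem' := ⟨0, Matrix.mulVec_zero C⟩
      smul_mem' := by rintro c x ⟨y, hy⟩; exact ⟨c • y, by simp [Matrix.mulVec_smul, hy]⟩ }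
  have hinner : ∀ x y : EuclideanSpace ℝ (Fin n), ⟪x, y⟫ = x ⬝ᵥ y := by
    intro x y
    simp [PiLp.inner_apply, dotProduct, RCLike.inner_apply, mul_comm]
  let a' : EuclideanSpace ℝ (Fin n) := (WithLp.equiv 2 _).symm a
  have haK : a' ∈ Vᗮᗮ := by
    rw [Submodule.mem_orthogonal]
    intro u hu
    rw [Submodule.mem_orthogonal] at hu
    have hker : Cᵀ *ᵥ u = 0 := by
      have h1 : (0:ℝ) = (C *ᵥ (Cᵀ *ᵥ u)) ⬝ᵥ u := by
        rw [← hu (WithLp.toLp 2 (C *ᵥ (Cᵀ *ᵥ u))) ⟨Cᵀ *ᵥ u, rfl⟩, hinner]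
      rw [mv_dot] at h1
      exact (dotProduct_self_eq_zero.mp h1.symm)
    rw [hinner, dotProduct_comm]
    exact h (WithLp.ofLp u) hker
  rw [Submodule.orthogonal_orthogonal] at haK
  exact haK

/-- let `gra T = {(Cy, Dy) : y ∈ ℝ^m}` be monotone. Then
(a) `E₁` with `gra E₁ = gra T + ({0} × ker Cᵀ)` is maximally monotone,
`gra T ⊆ gra E₁`, `dom E₁ = dom T = ran C`; and
(b) `E₂` with `gra E₂ = gra T + (ker Dᵀ × {0})` is maximally monotone,
`gra T ⊆ gra E₂`, `ran E₂ = ran T = ran D`. -/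
theorem stmt19 {n m : ℕ} (C D : Matrix (Fin n) (Fin m) ℝ)
    (hmono : IsMonotoneSet (Set.range (fun y : Fin m → ℝ => (C *ᵥ y, D *ᵥ y)))) :
    (IsMaxMonotoneSet (Set.range (fun y : Fin m → ℝ => (C *ᵥ y, D *ᵥ y)) +
        ({(0 : Fin n → ℝ)} ×ˢ {u : Fin n → ℝ | Cᵀ *ᵥ u = 0})) ∧
      Set.range (fun y : Fin m → ℝ => (C *ᵥ y, D *ᵥ y)) ⊆
        Set.range (fun y : Fin m → ℝ => (C *ᵥ y, D *ᵥ y)) +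
          ({(0 : Fin n → ℝ)} ×ˢ {u : Fin n → ℝ | Cᵀ *ᵥ u = 0}) ∧
      domSet (Set.range (fun y : Fin m → ℝ => (C *ᵥ y, D *ᵥ y)) +
          ({(0 : Fin n → ℝ)} ×ˢ {u : Fin n → ℝ | Cᵀ *ᵥ u = 0})) =
        domSet (Set.range (fun y : Fin m → ℝ => (C *ᵥ y, D *ᵥ y))) ∧
      domSet (Set.range (fun y : Fin m → ℝ => (C *ᵥ y, D *ᵥ y))) =
        Set.range (fun y : Fin m → ℝ => C *ᵥ y)) ∧
    (IsMaxMonotoneSet (Set.range (fun y : Fin m → ℝ => (C *ᵥ y, D *ᵥ y)) +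
        ({u : Fin n → ℝ | Dᵀ *ᵥ u = 0} ×ˢ {(0 : Fin n → ℝ)})) ∧
      Set.range (fun y : Fin m → ℝ => (C *ᵥ y, D *ᵥ y)) ⊆
        Set.range (fun y : Fin m → ℝ => (C *ᵥ y, D *ᵥ y)) +
          ({u : Fin n → ℝ | Dᵀ *ᵥ u = 0} ×ˢ {(0 : Fin n → ℝ)}) ∧
      ranSet (Set.range (fun y : Fin m → ℝ => (C *ᵥ y, D *ᵥ y)) +
          ({u : Fin n → ℝ | Dᵀ *ᵥ u = 0} ×ˢ {(0 : Fin n → ℝ)})) =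
        ranSet (Set.range (fun y : Fin m → ℝ => (C *ᵥ y, D *ᵥ y))) ∧
      ranSet (Set.range (fun y : Fin m → ℝ => (C *ᵥ y, D *ᵥ y))) =
        Set.range (fun y : Fin m → ℝ => D *ᵥ y)) := by
  have hT : ∀ w : Fin m → ℝ, 0 ≤ (C *ᵥ w) ⬝ᵥ (D *ᵥ w) := by
    intro w
    have := hmono (C *ᵥ w, D *ᵥ w) ⟨w, rfl⟩ (C *ᵥ 0, D *ᵥ 0) ⟨0, rfl⟩
    simpa using this
  -- membership characterizations
  have hmemE1 : ∀ p : (Fin n → ℝ) × (Fin n → ℝ),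
      p ∈ (Set.range (fun y : Fin m → ℝ => (C *ᵥ y, D *ᵥ y)) +
        ({(0 : Fin n → ℝ)} ×ˢ {u : Fin n → ℝ | Cᵀ *ᵥ u = 0})) ↔
      ∃ y u, Cᵀ *ᵥ u = 0 ∧ p.1 = C *ᵥ y ∧ p.2 = D *ᵥ y + u := by
    intro p
    constructor
    · intro hp
      rcases Set.mem_add.mp hp with ⟨s, hs, t, ht, hst⟩
      rcases hs with ⟨y, rfl⟩
      rcases Set.mem_prod.mp ht with ⟨ht1, ht2⟩
      rw [Set.mem_singleton_iff] at ht1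
      refine ⟨y, t.2, ht2, ?_, ?_⟩
      · rw [← hst]; simp [ht1]
      · rw [← hst]; simp
    · rintro ⟨y, u, hu, h1, h2⟩
      refine Set.mem_add.mpr ⟨(C *ᵥ y, D *ᵥ y), ⟨y, rfl⟩, (0, u),
        Set.mem_prod.mpr ⟨rfl, hu⟩, ?_⟩
      rw [Prod.ext_iff]
      exact ⟨by simp [h1], by simp [h2]⟩
  have hmemE2 : ∀ p : (Fin n → ℝ) × (Fin n → ℝ),
      p ∈ (Set.range (fun y : Fin m → ℝ => (C *ᵥ y, D *ᵥ y)) +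
        ({u : Fin n → ℝ | Dᵀ *ᵥ u = 0} ×ˢ {(0 : Fin n → ℝ)})) ↔
      ∃ y u, Dᵀ *ᵥ u = 0 ∧ p.1 = C *ᵥ y + u ∧ p.2 = D *ᵥ y := by
    intro p
    constructor
    · intro hp
      rcases Set.mem_add.mp hp with ⟨s, hs, t, ht, hst⟩
      rcases hs with ⟨y, rfl⟩
      rcases Set.mem_prod.mp ht with ⟨ht1, ht2⟩
      rw [Set.mem_singleton_iff] at ht2
      refine ⟨y, t.1, ht1, ?_, ?_⟩
      · rw [← hst]; simp
      · rw [← hst]; simp [ht2]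
    · rintro ⟨y, u, hu, h1, h2⟩
      refine Set.mem_add.mpr ⟨(C *ᵥ y, D *ᵥ y), ⟨y, rfl⟩, (u, 0),
        Set.mem_prod.mpr ⟨hu, rfl⟩, ?_⟩
      rw [Prod.ext_iff]
      exact ⟨by simp [h1], by simp [h2]⟩
  constructor
  · -- part (a)
    refine ⟨⟨?_, ?_⟩, ?_, ?_, ?_⟩
    · -- monotone
      intro pa hpa pb hpb
      rcases (hmemE1 pa).mp hpa with ⟨y, u, hu, hy1, hy2⟩
      rcases (hmemE1 pb).mp hpb with ⟨z, v, hv, hz1, hz2⟩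
      rw [hy1, hy2, hz1, hz2]
      have e1 : C *ᵥ y - C *ᵥ z = C *ᵥ (y - z) := (Matrix.mulVec_sub C y z).symm
      have e2 : D *ᵥ y + u - (D *ᵥ z + v) = D *ᵥ (y - z) + (u - v) := by
        rw [Matrix.mulVec_sub]; abel
      have e3 : (C *ᵥ (y - z)) ⬝ᵥ (u - v) = 0 := by
        rw [mv_dot, Matrix.mulVec_sub, hu, hv, sub_zero, dotProduct_zero]
      rw [e1, e2, dotProduct_add, e3, add_zero]
      exact hT (y - z)
    · -- maximal
      intro a ha
      have h1 : ∀ u, Cᵀ *ᵥ u = 0 → a.1 ⬝ᵥ u = 0 := by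
        intro u hu
        have hta : ∀ t : ℝ, 0 ≤ a.1 ⬝ᵥ a.2 + t * (-(a.1 ⬝ᵥ u)) := by
          intro t
          have hm := ha (0, t • u) ((hmemE1 _).mpr
            ⟨0, t • u, by rw [Matrix.mulVec_smul, hu, smul_zero], by simp, by simp⟩)
          have e : (a.1 - (0 : Fin n → ℝ)) ⬝ᵥ (a.2 - t • u)
              = a.1 ⬝ᵥ a.2 + t * (-(a.1 ⬝ᵥ u)) := by
            rw [sub_zero, dotProduct_sub, dotProduct_smul, smul_eq_mul]
            ring
          rw [← e]
          exact hm
        have := lin_zero _ _ hta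
        linarith
      obtain ⟨y₀, hy₀⟩ := mem_range_of_perp_ker C a.1 h1
      have h2 : ∀ w, (C *ᵥ w) ⬝ᵥ (a.2 - D *ᵥ y₀) = 0 := by
        intro w
        have hq : ∀ t : ℝ, 0 ≤ t * (-((C *ᵥ w) ⬝ᵥ (a.2 - D *ᵥ y₀)))
            + t ^ 2 * ((C *ᵥ w) ⬝ᵥ (D *ᵥ w)) := by
          intro t
          have hm := ha (C *ᵥ (y₀ + t • w), D *ᵥ (y₀ + t • w))
            ((hmemE1 _).mpr ⟨y₀ + t • w, 0, Matrix.mulVec_zero _, rfl, by simp⟩)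
          have e : (a.1 - C *ᵥ (y₀ + t • w)) ⬝ᵥ (a.2 - D *ᵥ (y₀ + t • w))
              = t * (-((C *ᵥ w) ⬝ᵥ (a.2 - D *ᵥ y₀))) + t ^ 2 * ((C *ᵥ w) ⬝ᵥ (D *ᵥ w)) := by
            rw [← hy₀]
            simp only [Matrix.mulVec_add, Matrix.mulVec_smul, dotProduct_sub,
              sub_dotProduct, smul_dotProduct, dotProduct_smul,
              add_dotProduct, dotProduct_add, smul_eq_mul]
            ring
          rw [← e]
          exact hm
        have h0 := quad_zero _ _ (hT w) hq
        linarith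
      have hker : Cᵀ *ᵥ (a.2 - D *ᵥ y₀) = 0 := by
        have := h2 (Cᵀ *ᵥ (a.2 - D *ᵥ y₀))
        rw [mv_dot] at this
        exact dotProduct_self_eq_zero.mp this
      exact (hmemE1 a).mpr ⟨y₀, a.2 - D *ᵥ y₀, hker, hy₀.symm, by abel⟩
    · -- subset
      intro p hp
      rcases hp with ⟨y, rfl⟩
      exact (hmemE1 _).mpr ⟨y, 0, Matrix.mulVec_zero _, rfl, by simp⟩
    · -- dom equality
      ext x
      constructor
      · rintro ⟨b, hb⟩
        rcases (hmemE1 _).mp hb with ⟨y, u, hu, h1, h2⟩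
        exact ⟨D *ᵥ y, ⟨y, by rw [Prod.ext_iff]; exact ⟨h1.symm, rfl⟩⟩⟩
      · rintro ⟨b, hb⟩
        rcases hb with ⟨y, hy⟩
        refine ⟨b, (hmemE1 _).mpr ⟨y, 0, Matrix.mulVec_zero _, ?_, ?_⟩⟩
        · exact (congrArg Prod.fst hy).symm
        · rw [add_zero]; exact (congrArg Prod.snd hy).symm
    · -- dom T = ran C
      ext x
      constructor
      · rintro ⟨b, y, hy⟩
        exact ⟨y, congrArg Prod.fst hy⟩
      · rintro ⟨y, hy⟩
        exact ⟨D *ᵥ y, ⟨y, by rw [Prod.ext_iff]; exact ⟨hy, rfl⟩⟩⟩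
  · -- part (b)
    refine ⟨⟨?_, ?_⟩, ?_, ?_, ?_⟩
    · -- monotone
      intro pa hpa pb hpb
      rcases (hmemE2 pa).mp hpa with ⟨y, u, hu, hy1, hy2⟩
      rcases (hmemE2 pb).mp hpb with ⟨z, v, hv, hz1, hz2⟩
      rw [hy1, hy2, hz1, hz2]
      have e1 : C *ᵥ y + u - (C *ᵥ z + v) = C *ᵥ (y - z) + (u - v) := by
        rw [Matrix.mulVec_sub]; abel
      have e2 : D *ᵥ y - D *ᵥ z = D *ᵥ (y - z) := (Matrix.mulVec_sub D y z).symm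
      have e3 : (u - v) ⬝ᵥ (D *ᵥ (y - z)) = 0 := by
        rw [dotProduct_comm, mv_dot, Matrix.mulVec_sub, hu, hv, sub_zero,
          dotProduct_zero]
      rw [e1, e2, add_dotProduct, e3, add_zero]
      exact hT (y - z)
    · -- maximal
      intro a ha
      have h1 : ∀ u, Dᵀ *ᵥ u = 0 → a.2 ⬝ᵥ u = 0 := by
        intro u hu
        have hta : ∀ t : ℝ, 0 ≤ a.1 ⬝ᵥ a.2 + t * (-(a.2 ⬝ᵥ u)) := by
          intro t
          have hm := ha (t • u, 0) ((hmemE2 _).mpr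
            ⟨0, t • u, by rw [Matrix.mulVec_smul, hu, smul_zero], by simp, by simp⟩)
          have e : (a.1 - t • u) ⬝ᵥ (a.2 - (0 : Fin n → ℝ))
              = a.1 ⬝ᵥ a.2 + t * (-(a.2 ⬝ᵥ u)) := by
            rw [sub_zero, sub_dotProduct, smul_dotProduct, smul_eq_mul,
              dotProduct_comm u a.2]
            ring
          rw [← e]
          exact hm
        have := lin_zero _ _ hta
        linarith
      obtain ⟨y₀, hy₀⟩ := mem_range_of_perp_ker D a.2 h1
      have h2 : ∀ w, (a.1 - C *ᵥ y₀) ⬝ᵥ (D *ᵥ w) = 0 := by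
        intro w
        have hq : ∀ t : ℝ, 0 ≤ t * (-((a.1 - C *ᵥ y₀) ⬝ᵥ (D *ᵥ w)))
            + t ^ 2 * ((C *ᵥ w) ⬝ᵥ (D *ᵥ w)) := by
          intro t
          have hm := ha (C *ᵥ (y₀ + t • w), D *ᵥ (y₀ + t • w))
            ((hmemE2 _).mpr ⟨y₀ + t • w, 0, Matrix.mulVec_zero _, by simp, rfl⟩)
          have e : (a.1 - C *ᵥ (y₀ + t • w)) ⬝ᵥ (a.2 - D *ᵥ (y₀ + t • w))
              = t * (-((a.1 - C *ᵥ y₀) ⬝ᵥ (D *ᵥ w)))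
                + t ^ 2 * ((C *ᵥ w) ⬝ᵥ (D *ᵥ w)) := by
            rw [← hy₀]
            simp only [Matrix.mulVec_add, Matrix.mulVec_smul, dotProduct_sub,
              sub_dotProduct, smul_dotProduct, dotProduct_smul,
              add_dotProduct, dotProduct_add, smul_eq_mul]
            ring
          rw [← e]
          exact hm
        have h0 := quad_zero _ _ (hT w) hq
        linarith
      have hker : Dᵀ *ᵥ (a.1 - C *ᵥ y₀) = 0 := by
        have := h2 (Dᵀ *ᵥ (a.1 - C *ᵥ y₀))
        rw [dotProduct_comm, mv_dot] at this
        exact dotProduct_self_eq_zero.mp this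
      exact (hmemE2 a).mpr ⟨y₀, a.1 - C *ᵥ y₀, hker, by abel, hy₀.symm⟩
    · -- subset
      intro p hp
      rcases hp with ⟨y, rfl⟩
      exact (hmemE2 _).mpr ⟨y, 0, Matrix.mulVec_zero _, by simp, rfl⟩
    · -- ran equality
      ext x
      constructor
      · rintro ⟨b, hb⟩
        rcases (hmemE2 _).mp hb with ⟨y, u, hu, h1, h2⟩
        exact ⟨C *ᵥ y, ⟨y, by rw [Prod.ext_iff]; exact ⟨rfl, h2.symm⟩⟩⟩
      · rintro ⟨b, hb⟩
        rcases hb with ⟨y, hy⟩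
        refine ⟨b, (hmemE2 _).mpr ⟨y, 0, Matrix.mulVec_zero _, ?_, ?_⟩⟩
        · rw [add_zero]; exact (congrArg Prod.fst hy).symm
        · exact (congrArg Prod.snd hy).symm
    · -- ran T = ran D
      ext x
      constructor
      · rintro ⟨b, y, hy⟩
        exact ⟨y, congrArg Prod.snd hy⟩
      · rintro ⟨y, hy⟩
        exact ⟨C *ᵥ y, ⟨y, by rw [Prod.ext_iff]; exact ⟨rfl, hy⟩⟩⟩
end
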